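/- arXiv:1101.5790 — 7 statements merged into one kernel-verified Lean document; each statement's English description precedes it below -/
import Mathlib

section
/- Let H ∈ (1/2, 1) and α, β ∈ (0,1) with α + β < 2H. Then for all T > 0, the double integral ∫₀ᵀ ∫₀ᵀ s^(−β) r^(−α) |s−r|^(2H−2) dr ds is finite. -/
open MeasureTheory Set

private lemma lint_rpow (p : ℝ) (a : ℝ) (hp : -1 < p) (ha : 0 < a) :
    ∫⁻ x in Ioo (0:ℝ) a, ENNReal.ofReal (x ^ p) = ENNReal.ofReal (a ^ (p+1) / (p+1)) := by
  have hint : IntervalIntegrable (fun x : ℝ => x ^ p) volume 0 a :=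
    intervalIntegral.intervalIntegrable_rpow' hp
  have hInt : IntegrableOn (fun x : ℝ => x ^ p) (Ioc 0 a) volume :=
    (intervalIntegrable_iff_integrableOn_Ioc_of_le ha.le).1 hint
  have hnn : 0 ≤ᶠ[ae (volume.restrict (Ioc (0:ℝ) a))] fun x : ℝ => x ^ p := by
    refine (ae_restrict_iff' measurableSet_Ioc).2 (ae_of_all _ fun x hx => ?_)
    exact Real.rpow_nonneg hx.1.le p
  calc ∫⁻ x in Ioo (0:ℝ) a, ENNReal.ofReal (x ^ p)
      = ∫⁻ x in Ioc (0:ℝ) a, ENNReal.ofReal (x ^ p) := setLIntegral_congr Ioo_ae_eq_Ioc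
    _ = ENNReal.ofReal (∫ x in Ioc (0:ℝ) a, x ^ p) :=
        (ofReal_integral_eq_lintegral_ofReal hInt hnn).symm
    _ = ENNReal.ofReal (a ^ (p+1) / (p+1)) := by
        rw [← intervalIntegral.integral_of_le ha.le, integral_rpow (Or.inl hp),
          Real.zero_rpow (by linarith : p + 1 ≠ 0), sub_zero]

private lemma rpow_half_le {x t γ : ℝ} (hx : 0 < x) (ht : x/2 ≤ t) (hγ1 : -1 ≤ γ)
    (hγ0 : γ ≤ 0) : t ^ γ ≤ 2 * x ^ γ := by
  have h1 : t ^ γ ≤ (x/2) ^ γ := Real.rpow_le_rpow_of_nonpos (by linarith) ht hγ0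
  have h2 : (x/2:ℝ) ^ γ = x ^ γ / 2 ^ γ := Real.div_rpow hx.le (by norm_num : (0:ℝ) ≤ 2) γ
  have h3 : (1:ℝ)/2 ≤ 2 ^ γ := by
    have h := Real.rpow_le_rpow_of_exponent_le (one_le_two) hγ1
    rw [Real.rpow_neg_one] at h; linarith
  have h4 : x ^ γ / 2 ^ γ ≤ x ^ γ / (1/2) :=
    div_le_div_of_nonneg_left (Real.rpow_nonneg hx.le γ) (by norm_num) h3
  have h5 : x ^ γ / (1/2) = 2 * x ^ γ := by ring
  linarith

private noncomputable def kerA (p q s r : ℝ) : ENNReal :=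
  if 2*r ≤ s then ENNReal.ofReal (2 * s ^ p * r ^ q) else 0

private noncomputable def kerB (c γ s r : ℝ) : ENNReal :=
  if s < 2*r ∧ r < 2*s then ENNReal.ofReal (2 * s ^ c * |s - r| ^ γ) else 0

private lemma measurable_kerA (p q : ℝ) : Measurable (fun x : ℝ × ℝ => kerA p q x.1 x.2) := by
  unfold kerA
  exact Measurable.ite (measurableSet_le (by fun_prop) (by fun_prop)) (by fun_prop)
    measurable_const

private lemma measurable_kerB (c γ : ℝ) : Measurable (fun x : ℝ × ℝ => kerB c γ x.1 x.2) := by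
  unfold kerB
  refine Measurable.ite ?_ (by fun_prop) measurable_const
  simp only [setOf_and]
  exact (measurableSet_lt (by fun_prop) (by fun_prop)).inter
    (measurableSet_lt (by fun_prop) (by fun_prop))

private lemma aux_int (p q T : ℝ) (hq : -1 < q) (hpq : -1 < p + q + 1) (hT : 0 < T) :
    (∫⁻ s in Ioo (0:ℝ) T, ∫⁻ r in Ioo (0:ℝ) T, kerA p q s r) < ⊤ := by
  simp only [kerA]
  have hq1 : (0:ℝ) < q + 1 := by linarith
  have key : ∀ s ∈ Ioo (0:ℝ) T,
      (∫⁻ r in Ioo (0:ℝ) T, if 2*r ≤ s then ENNReal.ofReal (2 * s ^ p * r ^ q) else 0)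
        ≤ ENNReal.ofReal ((2/(q+1)) * s ^ (p + q + 1)) := by
    intro s hs
    have h2sp : (0:ℝ) ≤ 2 * s ^ p := mul_nonneg (by norm_num) (Real.rpow_nonneg hs.1.le p)
    have h1 : ∀ r ∈ Ioo (0:ℝ) T,
        (if 2*r ≤ s then ENNReal.ofReal (2 * s ^ p * r ^ q) else 0)
          ≤ (Ioo (0:ℝ) s).indicator (fun r => ENNReal.ofReal (2 * s ^ p * r ^ q)) r := by
      intro r hr
      by_cases h : 2*r ≤ s
      · rw [if_pos h, indicator_of_mem (show r ∈ Ioo (0:ℝ) s from ⟨hr.1, by linarith [hr.1]⟩)]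
      · rw [if_neg h]; exact zero_le
    have hmeas : Measurable ((Ioo (0:ℝ) s).indicator
        (fun r => ENNReal.ofReal (2 * s ^ p * r ^ q))) :=
      Measurable.indicator (by fun_prop) measurableSet_Ioo
    calc (∫⁻ r in Ioo (0:ℝ) T, if 2*r ≤ s then ENNReal.ofReal (2 * s ^ p * r ^ q) else 0)
        ≤ ∫⁻ r in Ioo (0:ℝ) T,
            (Ioo (0:ℝ) s).indicator (fun r => ENNReal.ofReal (2 * s ^ p * r ^ q)) r :=
          setLIntegral_mono hmeas h1
      _ ≤ ∫⁻ r, (Ioo (0:ℝ) s).indicator (fun r => ENNReal.ofReal (2 * s ^ p * r ^ q)) r :=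
          lintegral_mono' Measure.restrict_le_self le_rfl
      _ = ∫⁻ r in Ioo (0:ℝ) s, ENNReal.ofReal (2 * s ^ p * r ^ q) :=
          lintegral_indicator measurableSet_Ioo _
      _ = ∫⁻ r in Ioo (0:ℝ) s, ENNReal.ofReal (2 * s ^ p) * ENNReal.ofReal (r ^ q) := by
          simp_rw [← ENNReal.ofReal_mul h2sp]
      _ = ENNReal.ofReal (2 * s ^ p) * ∫⁻ r in Ioo (0:ℝ) s, ENNReal.ofReal (r ^ q) :=
          lintegral_const_mul' _ _ ENNReal.ofReal_ne_top
      _ = ENNReal.ofReal (2 * s ^ p) * ENNReal.ofReal (s ^ (q+1) / (q+1)) := by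
          rw [lint_rpow q s hq hs.1]
      _ = ENNReal.ofReal ((2/(q+1)) * s ^ (p + q + 1)) := by
          rw [← ENNReal.ofReal_mul h2sp]
          congr 1
          have hsp : s ^ (p + q + 1) = s ^ p * s ^ q * s := by
            rw [Real.rpow_add hs.1, Real.rpow_add hs.1, Real.rpow_one]
          have hsq1 : s ^ (q+1) = s ^ q * s := by rw [Real.rpow_add hs.1, Real.rpow_one]
          rw [hsp, hsq1]
          have hq1' : q + 1 ≠ 0 := by linarith
          field_simp
  calc (∫⁻ s in Ioo (0:ℝ) T, ∫⁻ r in Ioo (0:ℝ) T,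
        (if 2*r ≤ s then ENNReal.ofReal (2 * s ^ p * r ^ q) else 0))
      ≤ ∫⁻ s in Ioo (0:ℝ) T, ENNReal.ofReal ((2/(q+1)) * s ^ (p + q + 1)) :=
        setLIntegral_mono (by fun_prop) key
    _ = ∫⁻ s in Ioo (0:ℝ) T, ENNReal.ofReal (2/(q+1)) * ENNReal.ofReal (s ^ (p + q + 1)) := by
        simp_rw [← ENNReal.ofReal_mul (by positivity : (0:ℝ) ≤ 2/(q+1))]
    _ = ENNReal.ofReal (2/(q+1)) * ∫⁻ s in Ioo (0:ℝ) T, ENNReal.ofReal (s ^ (p + q + 1)) :=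
        lintegral_const_mul' _ _ ENNReal.ofReal_ne_top
    _ = ENNReal.ofReal (2/(q+1)) * ENNReal.ofReal (T ^ (p+q+1+1) / (p+q+1+1)) := by
        rw [lint_rpow _ T hpq hT]
    _ < ⊤ := by finiteness

private lemma aux_intB (c γ T : ℝ) (hγ : -1 < γ) (hγ0 : γ < 0) (h1 : -1 < c + γ + 1)
    (hT : 0 < T) :
    (∫⁻ s in Ioo (0:ℝ) T, ∫⁻ r in Ioo (0:ℝ) T, kerB c γ s r) < ⊤ := by
  simp only [kerB]
  have hγ1 : (0:ℝ) < γ + 1 := by linarith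
  have key : ∀ s ∈ Ioo (0:ℝ) T,
      (∫⁻ r in Ioo (0:ℝ) T, if s < 2*r ∧ r < 2*s then ENNReal.ofReal (2 * s ^ c * |s - r| ^ γ) else 0)
        ≤ ENNReal.ofReal ((4/(γ+1)) * s ^ (c + γ + 1)) := by
    intro s hs
    have hs0 := hs.1
    have h2sc : (0:ℝ) ≤ 2 * s ^ c := mul_nonneg (by norm_num) (Real.rpow_nonneg hs0.le c)
    set g1 : ℝ → ENNReal := (Ioo (s/2) s).indicator (fun r => ENNReal.ofReal (2 * s ^ c * (s - r) ^ γ)) with hg1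
    set g2 : ℝ → ENNReal := (Ioo s (2*s)).indicator (fun r => ENNReal.ofReal (2 * s ^ c * (r - s) ^ γ)) with hg2
    have hb : ∀ r ∈ Ioo (0:ℝ) T,
        (if s < 2*r ∧ r < 2*s then ENNReal.ofReal (2 * s ^ c * |s - r| ^ γ) else 0) ≤ g1 r + g2 r := by
      intro r hr
      by_cases h : s < 2*r ∧ r < 2*s
      · rw [if_pos h]
        rcases lt_trichotomy r s with hrs | rfl | hrs
        · have hmem : r ∈ Ioo (s/2) s := ⟨by linarith [h.1], hrs⟩
          rw [hg1]
          rw [show |s - r| = s - r from abs_of_pos (by linarith)]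
          calc ENNReal.ofReal (2 * s ^ c * (s - r) ^ γ)
              = (Ioo (s/2) s).indicator (fun r => ENNReal.ofReal (2 * s ^ c * (s - r) ^ γ)) r := by
                rw [indicator_of_mem hmem]
            _ ≤ _ := le_self_add
        · rw [show |r - r| = (0:ℝ) by simp, Real.zero_rpow (ne_of_lt hγ0), mul_zero]
          simp
        · have hmem : r ∈ Ioo s (2*s) := ⟨hrs, h.2⟩
          rw [hg2]
          rw [show |s - r| = r - s by rw [abs_sub_comm]; exact abs_of_pos (by linarith)]
          calc ENNReal.ofReal (2 * s ^ c * (r - s) ^ γ)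
              = (Ioo s (2*s)).indicator (fun r => ENNReal.ofReal (2 * s ^ c * (r - s) ^ γ)) r := by
                rw [indicator_of_mem hmem]
            _ ≤ _ := le_add_self
      · rw [if_neg h]; exact zero_le
    have hm1 : Measurable g1 := Measurable.indicator (by fun_prop) measurableSet_Ioo
    have hm2 : Measurable g2 := Measurable.indicator (by fun_prop) measurableSet_Ioo
    have e1 : ∫⁻ r in Ioo (s/2) s, ENNReal.ofReal (2 * s ^ c * (s - r) ^ γ)
        = ∫⁻ u in Ioo (0:ℝ) (s/2), ENNReal.ofReal (2 * s ^ c * u ^ γ) := by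
      have h := (Measure.measurePreserving_sub_left volume s).setLIntegral_comp_emb
        (MeasurableEquiv.subLeft s).measurableEmbedding
        (fun r => ENNReal.ofReal (2 * s ^ c * (s - r) ^ γ)) (Ioo (0:ℝ) (s/2))
      rw [image_const_sub_Ioo] at h
      rw [show s - s/2 = s/2 by ring, sub_zero] at h
      rw [← h]
      apply setLIntegral_congr_fun measurableSet_Ioo
      exact fun u hu => by norm_num
    have e2 : ∫⁻ r in Ioo s (2*s), ENNReal.ofReal (2 * s ^ c * (r - s) ^ γ)
        = ∫⁻ u in Ioo (0:ℝ) s, ENNReal.ofReal (2 * s ^ c * u ^ γ) := by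
      have h := (measurePreserving_add_right volume s).setLIntegral_comp_emb
        (MeasurableEquiv.addRight s).measurableEmbedding
        (fun r => ENNReal.ofReal (2 * s ^ c * (r - s) ^ γ)) (Ioo (0:ℝ) s)
      rw [image_add_const_Ioo] at h
      rw [zero_add, show s + s = 2*s by ring] at h
      rw [← h]
      apply setLIntegral_congr_fun measurableSet_Ioo
      exact fun u hu => by norm_num
    have base : ∫⁻ u in Ioo (0:ℝ) s, ENNReal.ofReal (2 * s ^ c * u ^ γ)
        = ENNReal.ofReal (2 * s ^ c) * ENNReal.ofReal (s ^ (γ+1) / (γ+1)) := by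
      simp_rw [← lint_rpow γ s hγ hs0, ENNReal.ofReal_mul h2sc]
      exact lintegral_const_mul' _ _ ENNReal.ofReal_ne_top
    have base' : ∫⁻ u in Ioo (0:ℝ) (s/2), ENNReal.ofReal (2 * s ^ c * u ^ γ)
        ≤ ENNReal.ofReal (2 * s ^ c) * ENNReal.ofReal (s ^ (γ+1) / (γ+1)) := by
      rw [← base]; exact lintegral_mono_set (Ioo_subset_Ioo le_rfl (by linarith))
    calc (∫⁻ r in Ioo (0:ℝ) T, if s < 2*r ∧ r < 2*s then ENNReal.ofReal (2 * s ^ c * |s - r| ^ γ) else 0)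
        ≤ ∫⁻ r in Ioo (0:ℝ) T, (g1 r + g2 r) := setLIntegral_mono (hm1.add hm2) hb
      _ ≤ ∫⁻ r, (g1 r + g2 r) := lintegral_mono' Measure.restrict_le_self le_rfl
      _ = (∫⁻ r, g1 r) + ∫⁻ r, g2 r := lintegral_add_left hm1 _
      _ = (∫⁻ r in Ioo (s/2) s, ENNReal.ofReal (2 * s ^ c * (s - r) ^ γ))
          + ∫⁻ r in Ioo s (2*s), ENNReal.ofReal (2 * s ^ c * (r - s) ^ γ) := by
          rw [hg1, hg2, lintegral_indicator measurableSet_Ioo, lintegral_indicator measurableSet_Ioo]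
      _ ≤ ENNReal.ofReal (2 * s ^ c) * ENNReal.ofReal (s ^ (γ+1) / (γ+1))
          + ENNReal.ofReal (2 * s ^ c) * ENNReal.ofReal (s ^ (γ+1) / (γ+1)) := by
          rw [e1, e2, base]; exact add_le_add_left base' _
      _ = ENNReal.ofReal ((4/(γ+1)) * s ^ (c + γ + 1)) := by
          rw [← ENNReal.ofReal_mul h2sc, ← ENNReal.ofReal_add (by positivity)
            (by positivity), ← two_mul]
          congr 1
          have hsp : s ^ (c + γ + 1) = s ^ c * s ^ γ * s := by
            rw [Real.rpow_add hs0, Real.rpow_add hs0, Real.rpow_one]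
          have hsq1 : s ^ (γ+1) = s ^ γ * s := by rw [Real.rpow_add hs0, Real.rpow_one]
          rw [hsp, hsq1]
          have : γ + 1 ≠ 0 := by linarith
          field_simp
          ring
  calc (∫⁻ s in Ioo (0:ℝ) T, ∫⁻ r in Ioo (0:ℝ) T,
        (if s < 2*r ∧ r < 2*s then ENNReal.ofReal (2 * s ^ c * |s - r| ^ γ) else 0))
      ≤ ∫⁻ s in Ioo (0:ℝ) T, ENNReal.ofReal ((4/(γ+1)) * s ^ (c + γ + 1)) :=
        setLIntegral_mono (by fun_prop) key
    _ = ∫⁻ s in Ioo (0:ℝ) T, ENNReal.ofReal (4/(γ+1)) * ENNReal.ofReal (s ^ (c + γ + 1)) := by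
        simp_rw [← ENNReal.ofReal_mul (by positivity : (0:ℝ) ≤ 4/(γ+1))]
    _ = ENNReal.ofReal (4/(γ+1)) * ∫⁻ s in Ioo (0:ℝ) T, ENNReal.ofReal (s ^ (c + γ + 1)) :=
        lintegral_const_mul' _ _ ENNReal.ofReal_ne_top
    _ = ENNReal.ofReal (4/(γ+1)) * ENNReal.ofReal (T ^ (c+γ+1+1) / (c+γ+1+1)) := by
        rw [lint_rpow _ T h1 hT]
    _ < ⊤ := by finiteness

theorem stmt0 (H α β T : ℝ) (hH : 1/2 < H) (hH1 : H < 1)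
    (hα : α ∈ Set.Ioo (0:ℝ) 1) (hβ : β ∈ Set.Ioo (0:ℝ) 1)
    (hαβ : α + β < 2*H) (hT : 0 < T) :
    (∫⁻ s in Set.Ioo (0:ℝ) T, ∫⁻ r in Set.Ioo (0:ℝ) T,
      ENNReal.ofReal (s ^ (-β) * r ^ (-α) * |s - r| ^ (2*H - 2))) < ⊤ := by
  obtain ⟨hα0, hα1⟩ := hα
  obtain ⟨hβ0, hβ1⟩ := hβ
  -- pointwise bound
  have hpoint : ∀ s ∈ Ioo (0:ℝ) T, ∀ r ∈ Ioo (0:ℝ) T,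
      ENNReal.ofReal (s ^ (-β) * r ^ (-α) * |s - r| ^ (2*H - 2))
        ≤ kerA (2*H-2-β) (-α) s r + kerB (-(α+β)) (2*H-2) s r + kerA (2*H-2-α) (-β) r s := by
    intro s hs r hr
    have hs0 := hs.1
    have hr0 := hr.1
    by_cases hA : 2*r ≤ s
    · have hreal : s ^ (-β) * r ^ (-α) * |s - r| ^ (2*H - 2)
          ≤ 2 * s ^ (2*H-2-β) * r ^ (-α) := by
        rw [show |s - r| = s - r from abs_of_pos (by linarith)]
        have hd : (s - r) ^ (2*H-2) ≤ 2 * s ^ (2*H-2) :=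
          rpow_half_le hs0 (by linarith) (by linarith) (by linarith)
        have hsplit : s ^ (2*H-2-β) = s ^ (-β) * s ^ (2*H-2) := by
          rw [show 2*H-2-β = -β + (2*H-2) by ring, Real.rpow_add hs0]
        calc s ^ (-β) * r ^ (-α) * (s - r) ^ (2*H-2)
            ≤ s ^ (-β) * r ^ (-α) * (2 * s ^ (2*H-2)) := by
              refine mul_le_mul_of_nonneg_left hd ?_
              exact mul_nonneg (Real.rpow_nonneg hs0.le _) (Real.rpow_nonneg hr0.le _)
          _ = 2 * (s ^ (-β) * s ^ (2*H-2)) * r ^ (-α) := by ring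
          _ = 2 * s ^ (2*H-2-β) * r ^ (-α) := by rw [← hsplit]
      have h1 : ENNReal.ofReal (s ^ (-β) * r ^ (-α) * |s - r| ^ (2*H - 2))
          ≤ kerA (2*H-2-β) (-α) s r := by
        rw [kerA, if_pos hA]; exact ENNReal.ofReal_le_ofReal hreal
      exact le_trans h1 (le_trans le_self_add le_self_add)
    · by_cases hC : 2*s ≤ r
      · have hreal : s ^ (-β) * r ^ (-α) * |s - r| ^ (2*H - 2)
            ≤ 2 * r ^ (2*H-2-α) * s ^ (-β) := by
          rw [show |s - r| = r - s by rw [abs_sub_comm]; exact abs_of_pos (by linarith)]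
          have hd : (r - s) ^ (2*H-2) ≤ 2 * r ^ (2*H-2) :=
            rpow_half_le hr0 (by linarith) (by linarith) (by linarith)
          have hsplit : r ^ (2*H-2-α) = r ^ (-α) * r ^ (2*H-2) := by
            rw [show 2*H-2-α = -α + (2*H-2) by ring, Real.rpow_add hr0]
          calc s ^ (-β) * r ^ (-α) * (r - s) ^ (2*H-2)
              ≤ s ^ (-β) * r ^ (-α) * (2 * r ^ (2*H-2)) := by
                refine mul_le_mul_of_nonneg_left hd ?_
                exact mul_nonneg (Real.rpow_nonneg hs0.le _) (Real.rpow_nonneg hr0.le _)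
            _ = 2 * (r ^ (-α) * r ^ (2*H-2)) * s ^ (-β) := by ring
            _ = 2 * r ^ (2*H-2-α) * s ^ (-β) := by rw [← hsplit]
        have h1 : ENNReal.ofReal (s ^ (-β) * r ^ (-α) * |s - r| ^ (2*H - 2))
            ≤ kerA (2*H-2-α) (-β) r s := by
          rw [kerA, if_pos hC]; exact ENNReal.ofReal_le_ofReal hreal
        exact le_trans h1 le_add_self
      · have hcond : s < 2*r ∧ r < 2*s := ⟨by linarith, by linarith⟩
        have hD : (0:ℝ) ≤ |s - r| ^ (2*H-2) := Real.rpow_nonneg (abs_nonneg _) _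
        have hreal : s ^ (-β) * r ^ (-α) * |s - r| ^ (2*H - 2)
            ≤ 2 * s ^ (-(α+β)) * |s - r| ^ (2*H-2) := by
          have hr2 : r ^ (-α) ≤ 2 * s ^ (-α) :=
            rpow_half_le hs0 (by linarith) (by linarith) (by linarith)
          have hsplit : s ^ (-(α+β)) = s ^ (-β) * s ^ (-α) := by
            rw [show -(α+β) = -β + -α by ring, Real.rpow_add hs0]
          calc s ^ (-β) * r ^ (-α) * |s - r| ^ (2*H-2)
              ≤ s ^ (-β) * (2 * s ^ (-α)) * |s - r| ^ (2*H-2) := by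
                refine mul_le_mul_of_nonneg_right ?_ hD
                exact mul_le_mul_of_nonneg_left hr2 (Real.rpow_nonneg hs0.le _)
            _ = 2 * (s ^ (-β) * s ^ (-α)) * |s - r| ^ (2*H-2) := by ring
            _ = 2 * s ^ (-(α+β)) * |s - r| ^ (2*H-2) := by rw [← hsplit]
        have h1 : ENNReal.ofReal (s ^ (-β) * r ^ (-α) * |s - r| ^ (2*H - 2))
            ≤ kerB (-(α+β)) (2*H-2) s r := by
          rw [kerB, if_pos hcond]; exact ENNReal.ofReal_le_ofReal hreal
        exact le_trans h1 (le_trans le_add_self le_self_add)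
  -- measurability of single-variable slices
  have mA : ∀ s : ℝ, Measurable fun r => kerA (2*H-2-β) (-α) s r :=
    fun s => (measurable_kerA _ _).comp (measurable_const.prodMk measurable_id)
  have mB : ∀ s : ℝ, Measurable fun r => kerB (-(α+β)) (2*H-2) s r :=
    fun s => (measurable_kerB _ _).comp (measurable_const.prodMk measurable_id)
  have mC : ∀ s : ℝ, Measurable fun r => kerA (2*H-2-α) (-β) r s :=
    fun s => (measurable_kerA _ _).comp (measurable_id.prodMk measurable_const)
  -- measurability of inner integrals
  have MA : Measurable fun s => ∫⁻ r in Ioo (0:ℝ) T, kerA (2*H-2-β) (-α) s r :=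
    Measurable.lintegral_prod_right (f := fun s r => kerA (2*H-2-β) (-α) s r)
      (measurable_kerA _ _)
  have MB : Measurable fun s => ∫⁻ r in Ioo (0:ℝ) T, kerB (-(α+β)) (2*H-2) s r :=
    Measurable.lintegral_prod_right (f := fun s r => kerB (-(α+β)) (2*H-2) s r)
      (measurable_kerB _ _)
  have MC : Measurable fun s => ∫⁻ r in Ioo (0:ℝ) T, kerA (2*H-2-α) (-β) r s :=
    Measurable.lintegral_prod_right (f := fun s r => kerA (2*H-2-α) (-β) r s)
      ((measurable_kerA _ _).comp measurable_swap)
  have hIA : (∫⁻ s in Ioo (0:ℝ) T, ∫⁻ r in Ioo (0:ℝ) T, kerA (2*H-2-β) (-α) s r) < ⊤ :=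
    aux_int _ _ T (by linarith) (by linarith) hT
  have hIB : (∫⁻ s in Ioo (0:ℝ) T, ∫⁻ r in Ioo (0:ℝ) T, kerB (-(α+β)) (2*H-2) s r) < ⊤ :=
    aux_intB _ _ T (by linarith) (by linarith) (by linarith) hT
  have hIC : (∫⁻ s in Ioo (0:ℝ) T, ∫⁻ r in Ioo (0:ℝ) T, kerA (2*H-2-α) (-β) r s) < ⊤ := by
    have hswap := lintegral_lintegral_swap (μ := volume.restrict (Ioo (0:ℝ) T))
      (ν := volume.restrict (Ioo (0:ℝ) T)) (f := fun s r => kerA (2*H-2-α) (-β) r s)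
      (((measurable_kerA _ _).comp measurable_swap).aemeasurable)
    rw [hswap]
    exact aux_int _ _ T (by linarith) (by linarith) hT
  calc (∫⁻ s in Set.Ioo (0:ℝ) T, ∫⁻ r in Set.Ioo (0:ℝ) T,
        ENNReal.ofReal (s ^ (-β) * r ^ (-α) * |s - r| ^ (2*H - 2)))
      ≤ ∫⁻ s in Ioo (0:ℝ) T,
          ((∫⁻ r in Ioo (0:ℝ) T, kerA (2*H-2-β) (-α) s r)
            + (∫⁻ r in Ioo (0:ℝ) T, kerB (-(α+β)) (2*H-2) s r)
            + ∫⁻ r in Ioo (0:ℝ) T, kerA (2*H-2-α) (-β) r s) := by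
        refine setLIntegral_mono ((MA.add MB).add MC) (fun s hs => ?_)
        calc (∫⁻ r in Set.Ioo (0:ℝ) T,
              ENNReal.ofReal (s ^ (-β) * r ^ (-α) * |s - r| ^ (2*H - 2)))
            ≤ ∫⁻ r in Ioo (0:ℝ) T,
                (kerA (2*H-2-β) (-α) s r + kerB (-(α+β)) (2*H-2) s r
                  + kerA (2*H-2-α) (-β) r s) :=
              setLIntegral_mono (((mA s).add (mB s)).add (mC s)) (hpoint s hs)
          _ = _ := by
              rw [lintegral_add_left (f := fun r => kerA (2*H-2-β) (-α) s r + kerB (-(α+β)) (2*H-2) s r)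
                ((mA s).add (mB s)), lintegral_add_left (mA s)]
    _ = (∫⁻ s in Ioo (0:ℝ) T, ∫⁻ r in Ioo (0:ℝ) T, kerA (2*H-2-β) (-α) s r)
        + (∫⁻ s in Ioo (0:ℝ) T, ∫⁻ r in Ioo (0:ℝ) T, kerB (-(α+β)) (2*H-2) s r)
        + ∫⁻ s in Ioo (0:ℝ) T, ∫⁻ r in Ioo (0:ℝ) T, kerA (2*H-2-α) (-β) r s := by
        rw [lintegral_add_left (f := fun s => (∫⁻ r in Ioo (0:ℝ) T, kerA (2*H-2-β) (-α) s r)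
          + ∫⁻ r in Ioo (0:ℝ) T, kerB (-(α+β)) (2*H-2) s r) (MA.add MB), lintegral_add_left MA]
    _ < ⊤ := ENNReal.add_lt_top.2 ⟨ENNReal.add_lt_top.2 ⟨hIA, hIB⟩, hIC⟩
end

section
/- Let H ∈ (1/2,1) and α ∈ (2H−1, 1). Then there exists a constant c > 0 such that for all 0 ≤ s ≤ t ≤ T, ∫ₛᵗ (T−u)^(α−1) ∫₀ᵘ (T−v)^(−α) (u−v)^(2H−2) dv du ≤ c (t−s)^(2H−1). -/
open MeasureTheory Set

private lemma rpow_subadd {a b p : ℝ} (ha : 0 ≤ a) (hb : 0 ≤ b) (hp0 : 0 ≤ p) (hp1 : p ≤ 1) :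
    (a + b) ^ p ≤ a ^ p + b ^ p := by
  have h := NNReal.rpow_add_le_add_rpow a.toNNReal b.toNNReal hp0 hp1
  rw [← Real.toNNReal_add ha hb] at h
  have h2 := NNReal.coe_le_coe.2 h
  rw [NNReal.coe_add] at h2
  simpa [NNReal.coe_rpow, Real.coe_toNNReal _ (by linarith : (0:ℝ) ≤ a + b),
    Real.coe_toNNReal _ ha, Real.coe_toNNReal _ hb] using h2

open intervalIntegral in
private lemma integral_Ioo_sub_rpow {u c d p : ℝ} (hcd : c ≤ d)
    (h : -1 < p ∨ (p ≠ -1 ∧ 0 < u - d)) :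
    (∫ v in Ioo c d, (u - v) ^ p) = ((u - c) ^ (p+1) - (u - d) ^ (p+1)) / (p+1) := by
  have h' : -1 < p ∨ p ≠ -1 ∧ (0:ℝ) ∉ Set.uIcc (u - d) (u - c) := by
    rcases h with h | ⟨h1, h2⟩
    · exact Or.inl h
    · exact Or.inr ⟨h1, Set.notMem_uIcc_of_lt h2 (by linarith : (0:ℝ) < u - c)⟩
  rw [← integral_Ioc_eq_integral_Ioo, ← intervalIntegral.integral_of_le hcd]
  rw [show (∫ v in c..d, (u - v) ^ p) = ∫ v in c..d, (fun x => x ^ p) (u - v) from rfl]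
  rw [intervalIntegral.integral_comp_sub_left (fun x => x ^ p) u]
  exact integral_rpow h'

private lemma setIntegral_mono_nonneg {f g : ℝ → ℝ} {s : Set ℝ} (hs : MeasurableSet s)
    (hf : ∀ x ∈ s, 0 ≤ f x) (hg : IntegrableOn g s volume) (h : ∀ x ∈ s, f x ≤ g x) :
    ∫ x in s, f x ≤ ∫ x in s, g x :=
  integral_mono_of_nonneg ((ae_restrict_iff' hs).2 (ae_of_all _ hf)) hg
    ((ae_restrict_iff' hs).2 (ae_of_all _ h))

private lemma inner_bound {H α T u : ℝ} (hH : 1/2 < H) (hH1 : H < 1)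
    (hαl : 2*H - 1 < α) (hu0 : 0 < u) (huT : u < T) :
    (∫ v in Ioo 0 u, (T - v) ^ (-α) * (u - v) ^ (2*H - 2)) ≤
      (1/(α - (2*H-1)) + 1/(2*H-1)) * (T - u) ^ (2*H - 1 - α) := by
  have hK : 0 < T - u := by linarith
  have h2H1 : 0 < 2*H - 1 := by linarith
  have hαd : 0 < α - (2*H-1) := by linarith
  set v₀ : ℝ := 2*u - T with hv₀
  have hv₀u : v₀ < u := by rw [hv₀]; linarith
  have huv₀ : u - v₀ = T - u := by rw [hv₀]; ring
  set f₁ : ℝ → ℝ := fun v => (u - v) ^ (2*H - 2 - α) with hf₁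
  set f₂ : ℝ → ℝ := fun v => (T - u) ^ (-α) * (u - v) ^ (2*H - 2) with hf₂
  -- integrability of f₂ on Icc v₀ u
  have hint2 : IntegrableOn f₂ (Icc v₀ u) volume := by
    have i2 : IntervalIntegrable (fun x : ℝ => x ^ (2*H - 2)) volume 0 (u - v₀) :=
      intervalIntegral.intervalIntegrable_rpow' (by linarith)
    have i3 := i2.comp_sub_left u
    simp only [sub_zero, sub_sub_cancel] at i3
    exact ((intervalIntegrable_iff_integrableOn_Icc_of_le hv₀u.le).1 i3.symm).const_mul _
  -- integrability of f₁ on Ioo 0 v₀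
  have hint1 : IntegrableOn f₁ (Ioo 0 v₀) volume := by
    rcases le_or_gt v₀ 0 with hle | hpos
    · rw [Set.Ioo_eq_empty (not_lt.2 hle)]
      exact integrableOn_empty
    · have hc : ContinuousOn f₁ (Icc 0 v₀) := by
        apply ContinuousOn.rpow_const
        · exact (continuous_const.sub continuous_id).continuousOn
        · intro x hx
          refine Or.inl (ne_of_gt ?_)
          have := hx.2
          linarith
      exact (hc.integrableOn_Icc).mono_set Ioo_subset_Icc_self
  have hgi1 : Integrable ((Ioo (0:ℝ) v₀).indicator f₁) (volume.restrict (Ioo 0 u)) := by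
    rw [integrable_indicator_iff measurableSet_Ioo]
    rw [IntegrableOn, Measure.restrict_restrict measurableSet_Ioo]
    exact hint1.mono_set inter_subset_left
  have hgi2 : Integrable ((Icc v₀ u).indicator f₂) (volume.restrict (Ioo 0 u)) := by
    rw [integrable_indicator_iff measurableSet_Icc]
    rw [IntegrableOn, Measure.restrict_restrict measurableSet_Icc]
    exact hint2.mono_set inter_subset_left
  have hfnonneg : ∀ v ∈ Ioo (0:ℝ) u, 0 ≤ (T - v) ^ (-α) * (u - v) ^ (2*H - 2) := by
    intro v hv
    exact mul_nonneg (Real.rpow_nonneg (by linarith [hv.2] : (0:ℝ) ≤ T - v) _)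
      (Real.rpow_nonneg (by linarith [hv.2] : (0:ℝ) ≤ u - v) _)
  have hmono : ∀ v ∈ Ioo (0:ℝ) u, (T - v) ^ (-α) * (u - v) ^ (2*H - 2) ≤
      (Ioo 0 v₀).indicator f₁ v + (Icc v₀ u).indicator f₂ v := by
    intro v hv
    obtain ⟨hv0, hvu⟩ := hv
    have huv : 0 < u - v := by linarith
    rcases lt_or_ge v v₀ with hcase | hcase
    · have h1 : (T - v) ^ (-α) * (u - v) ^ (2*H - 2) ≤ f₁ v := by
        have hb : (T - v) ^ (-α) ≤ (u - v) ^ (-α) :=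
          Real.rpow_le_rpow_of_nonpos huv (by linarith) (by linarith)
        calc (T - v) ^ (-α) * (u - v) ^ (2*H - 2)
            ≤ (u - v) ^ (-α) * (u - v) ^ (2*H - 2) :=
              mul_le_mul_of_nonneg_right hb (Real.rpow_nonneg huv.le _)
          _ = f₁ v := by
              rw [hf₁, ← Real.rpow_add huv]; ring_nf
      have h3 : 0 ≤ (Icc v₀ u).indicator f₂ v := by
        apply Set.indicator_nonneg
        intro a ha
        exact mul_nonneg (Real.rpow_nonneg hK.le _)
          (Real.rpow_nonneg (by linarith [ha.2] : (0:ℝ) ≤ u - a) _)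
      calc (T - v) ^ (-α) * (u - v) ^ (2*H - 2) ≤ f₁ v := h1
        _ = (Ioo 0 v₀).indicator f₁ v := (Set.indicator_of_mem (Set.mem_Ioo.mpr ⟨hv0, hcase⟩) f₁).symm
        _ ≤ _ := le_add_of_nonneg_right h3
    · have h1 : (T - v) ^ (-α) * (u - v) ^ (2*H - 2) ≤ f₂ v := by
        have hb : (T - v) ^ (-α) ≤ (T - u) ^ (-α) :=
          Real.rpow_le_rpow_of_nonpos hK (by linarith) (by linarith)
        exact mul_le_mul_of_nonneg_right hb (Real.rpow_nonneg huv.le _)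
      have h3 : 0 ≤ (Ioo 0 v₀).indicator f₁ v := by
        apply Set.indicator_nonneg
        intro a ha
        exact Real.rpow_nonneg (by linarith [ha.2] : (0:ℝ) ≤ u - a) _
      calc (T - v) ^ (-α) * (u - v) ^ (2*H - 2) ≤ f₂ v := h1
        _ = (Icc v₀ u).indicator f₂ v := (Set.indicator_of_mem (Set.mem_Icc.mpr ⟨hcase, hvu.le⟩) f₂).symm
        _ ≤ _ := le_add_of_nonneg_left h3
  have key : (∫ v in Ioo 0 u, (T - v) ^ (-α) * (u - v) ^ (2*H - 2)) ≤
      ∫ v in Ioo 0 u, ((Ioo 0 v₀).indicator f₁ v + (Icc v₀ u).indicator f₂ v) :=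
    setIntegral_mono_nonneg measurableSet_Ioo hfnonneg (hgi1.add hgi2) hmono
  have hsplit : (∫ v in Ioo 0 u, ((Ioo 0 v₀).indicator f₁ v + (Icc v₀ u).indicator f₂ v)) =
      (∫ v in Ioo 0 u ∩ Ioo 0 v₀, f₁ v) + ∫ v in Ioo 0 u ∩ Icc v₀ u, f₂ v := by
    rw [integral_add hgi1 hgi2, setIntegral_indicator measurableSet_Ioo,
      setIntegral_indicator measurableSet_Icc]
  have hterm1 : (∫ v in Ioo 0 u ∩ Ioo 0 v₀, f₁ v) ≤
      (1/(α - (2*H-1))) * (T - u) ^ (2*H - 1 - α) := by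
    rcases le_or_gt v₀ 0 with hle | hpos
    · rw [Set.Ioo_eq_empty (not_lt.2 hle), inter_empty, MeasureTheory.setIntegral_empty]
      exact mul_nonneg (by positivity) (Real.rpow_nonneg hK.le _)
    · have hss : Ioo (0:ℝ) u ∩ Ioo 0 v₀ = Ioo 0 v₀ :=
        inter_eq_self_of_subset_right (Ioo_subset_Ioo le_rfl hv₀u.le)
      rw [hss, hf₁, integral_Ioo_sub_rpow hpos.le
        (Or.inr ⟨by intro hc; linarith [hc], by rw [huv₀]; exact hK⟩)]
      rw [sub_zero, huv₀, show 2*H - 2 - α + 1 = 2*H - 1 - α by ring]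
      have hd1 : (2*H - 1 - α) ≠ 0 := by intro hc; linarith
      have hd2 : (α - (2*H-1)) ≠ 0 := ne_of_gt hαd
      have hrw : (u ^ (2*H - 1 - α) - (T - u) ^ (2*H - 1 - α)) / (2*H - 1 - α) =
          ((T - u) ^ (2*H - 1 - α) - u ^ (2*H - 1 - α)) / (α - (2*H - 1)) := by
        field_simp
        ring
      have hu_nonneg : 0 ≤ u ^ (2*H - 1 - α) := Real.rpow_nonneg hu0.le _
      have hrhs : (1/(α - (2*H-1))) * (T - u) ^ (2*H - 1 - α) =
          (T - u) ^ (2*H - 1 - α) / (α - (2*H-1)) := by ring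
      rw [hrw, hrhs]
      gcongr
      linarith
  have hterm2 : (∫ v in Ioo 0 u ∩ Icc v₀ u, f₂ v) ≤ (1/(2*H-1)) * (T - u) ^ (2*H - 1 - α) := by
    have hnn : 0 ≤ᵐ[volume.restrict (Icc v₀ u)] f₂ :=
      (ae_restrict_iff' measurableSet_Icc).2 (ae_of_all _ fun x hx =>
        mul_nonneg (Real.rpow_nonneg hK.le _)
          (Real.rpow_nonneg (by linarith [hx.2] : (0:ℝ) ≤ u - x) _))
    refine (setIntegral_mono_set hint2 hnn
      (HasSubset.Subset.eventuallyLE inter_subset_right)).trans ?_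
    rw [integral_Icc_eq_integral_Ioc, integral_Ioc_eq_integral_Ioo, hf₂, integral_const_mul,
      integral_Ioo_sub_rpow hv₀u.le (Or.inl (by linarith)), sub_self, huv₀,
      show 2*H - 2 + 1 = 2*H - 1 by ring, Real.zero_rpow (ne_of_gt h2H1), sub_zero]
    have : (T - u) ^ (-α) * ((T - u) ^ (2*H - 1) / (2*H - 1)) =
        (1/(2*H-1)) * (T - u) ^ (2*H - 1 - α) := by
      rw [show (2*H - 1 - α) = -α + (2*H-1) by ring, Real.rpow_add hK]
      ring
    exact this.le
  calc (∫ v in Ioo 0 u, (T - v) ^ (-α) * (u - v) ^ (2*H - 2))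
      ≤ ∫ v in Ioo 0 u, ((Ioo 0 v₀).indicator f₁ v + (Icc v₀ u).indicator f₂ v) := key
    _ = (∫ v in Ioo 0 u ∩ Ioo 0 v₀, f₁ v) + ∫ v in Ioo 0 u ∩ Icc v₀ u, f₂ v := hsplit
    _ ≤ (1/(α - (2*H-1))) * (T - u) ^ (2*H - 1 - α) +
        (1/(2*H-1)) * (T - u) ^ (2*H - 1 - α) := add_le_add hterm1 hterm2
    _ = (1/(α - (2*H-1)) + 1/(2*H-1)) * (T - u) ^ (2*H - 1 - α) := by ring

theorem stmt7 (H α T : ℝ) (hH : 1/2 < H) (hH1 : H < 1)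
    (hα : α ∈ Set.Ioo (2*H - 1) 1) (hT : 0 < T) :
    ∃ c : ℝ, 0 < c ∧ ∀ s t : ℝ, 0 ≤ s → s ≤ t → t ≤ T →
      (∫ u in Set.Ioo s t, (T - u) ^ (α - 1) *
        ∫ v in Set.Ioo 0 u, (T - v) ^ (-α) * (u - v) ^ (2*H - 2))
        ≤ c * (t - s) ^ (2*H - 1) := by
  obtain ⟨hαl, hα1⟩ := hα
  have h2H1 : 0 < 2*H - 1 := by linarith
  have hαd : 0 < α - (2*H-1) := by linarith
  have hC : 0 < 1/(α - (2*H-1)) + 1/(2*H-1) := by positivity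
  refine ⟨(1/(α - (2*H-1)) + 1/(2*H-1)) / (2*H-1), by positivity, ?_⟩
  intro s t hs hst htT
  have hmaj : IntegrableOn
      (fun u => (1/(α - (2*H-1)) + 1/(2*H-1)) * (T - u) ^ (2*H - 2)) (Ioo s t) volume := by
    have i2 : IntervalIntegrable (fun x : ℝ => x ^ (2*H - 2)) volume (T - t) (T - s) :=
      intervalIntegral.intervalIntegrable_rpow' (by linarith)
    have i3 := i2.comp_sub_left T
    simp only [sub_sub_cancel] at i3
    exact ((intervalIntegrable_iff_integrableOn_Ioo_of_le hst).1 i3.symm).const_mul _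
  have hnn : ∀ u ∈ Ioo s t, 0 ≤ (T - u) ^ (α - 1) *
      ∫ v in Ioo 0 u, (T - v) ^ (-α) * (u - v) ^ (2*H - 2) := by
    intro u hu
    refine mul_nonneg (Real.rpow_nonneg (by linarith [hu.2] : (0:ℝ) ≤ T - u) _) ?_
    refine setIntegral_nonneg measurableSet_Ioo fun v hv => ?_
    exact mul_nonneg (Real.rpow_nonneg (by linarith [hv.2, hu.2] : (0:ℝ) ≤ T - v) _)
      (Real.rpow_nonneg (by linarith [hv.2] : (0:ℝ) ≤ u - v) _)
  have hb : ∀ u ∈ Ioo s t, (T - u) ^ (α - 1) *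
      (∫ v in Ioo 0 u, (T - v) ^ (-α) * (u - v) ^ (2*H - 2)) ≤
      (1/(α - (2*H-1)) + 1/(2*H-1)) * (T - u) ^ (2*H - 2) := by
    intro u hu
    have hu0 : 0 < u := lt_of_le_of_lt hs hu.1
    have huT : u < T := lt_of_lt_of_le hu.2 htT
    have hKu : 0 < T - u := by linarith
    calc (T - u) ^ (α - 1) * (∫ v in Ioo 0 u, (T - v) ^ (-α) * (u - v) ^ (2*H - 2))
        ≤ (T - u) ^ (α - 1) *
          ((1/(α - (2*H-1)) + 1/(2*H-1)) * (T - u) ^ (2*H - 1 - α)) :=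
          mul_le_mul_of_nonneg_left (inner_bound hH hH1 hαl hu0 huT)
            (Real.rpow_nonneg hKu.le _)
      _ = (1/(α - (2*H-1)) + 1/(2*H-1)) * (T - u) ^ (2*H - 2) := by
          rw [show (2*H - 2 : ℝ) = (α - 1) + (2*H - 1 - α) by ring, Real.rpow_add hKu]
          ring
  have hmain := setIntegral_mono_nonneg measurableSet_Ioo hnn hmaj hb
  refine hmain.trans ?_
  rw [integral_const_mul, integral_Ioo_sub_rpow hst (Or.inl (by linarith)),
    show 2*H - 2 + 1 = 2*H - 1 by ring]
  have hsub : (T - s) ^ (2*H-1) - (T - t) ^ (2*H-1) ≤ (t - s) ^ (2*H-1) := by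
    have h := rpow_subadd (a := T - t) (b := t - s) (p := 2*H-1) (by linarith) (by linarith)
      (by linarith) (by linarith)
    rw [show T - t + (t - s) = T - s by ring] at h
    linarith
  calc (1/(α - (2*H-1)) + 1/(2*H-1)) *
        (((T - s) ^ (2*H-1) - (T - t) ^ (2*H-1)) / (2*H-1))
      ≤ (1/(α - (2*H-1)) + 1/(2*H-1)) * ((t - s) ^ (2*H-1) / (2*H-1)) := by
        refine mul_le_mul_of_nonneg_left ?_ hC.le
        gcongr
    _ = (1/(α - (2*H-1)) + 1/(2*H-1)) / (2*H-1) * (t - s) ^ (2*H-1) := by ring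
end

section
/- Let H ∈ (1/2,1) and α ∈ (0, 2H−1). Then there exists a constant c > 0 such that for all 0 ≤ s ≤ t ≤ T, ∫ₛᵗ (T−u)^(α−1) ∫₀ᵘ (T−v)^(−α) (u−v)^(2H−2) dv du ≤ c (t−s)^α. -/
open MeasureTheory Set

private lemma rpow_sub_add (a b p : ℝ) (ha : 0 ≤ a) (hb : 0 ≤ b) (hp : 0 ≤ p)
    (hp1 : p ≤ 1) : (a + b) ^ p ≤ a ^ p + b ^ p := by
  have h := NNReal.rpow_add_le_add_rpow (Real.toNNReal a) (Real.toNNReal b) hp hp1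
  have := NNReal.coe_le_coe.mpr h
  simpa [NNReal.coe_rpow, Real.coe_toNNReal a ha, Real.coe_toNNReal b hb,
    Real.coe_toNNReal _ (add_nonneg ha hb)] using this

theorem stmt8 (H α T : ℝ) (hH : 1/2 < H) (hH1 : H < 1)
    (hα : α ∈ Set.Ioo (0:ℝ) (2*H - 1)) (hT : 0 < T) :
    ∃ c : ℝ, 0 < c ∧ ∀ s t : ℝ, 0 ≤ s → s ≤ t → t ≤ T →
      (∫ u in Set.Ioo s t, (T - u) ^ (α - 1) *
        ∫ v in Set.Ioo 0 u, (T - v) ^ (-α) * (u - v) ^ (2*H - 2))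
        ≤ c * (t - s) ^ α := by
  obtain ⟨hα0, hα2⟩ := hα
  set β : ℝ := 2*H - 1 - α with hβdef
  have hβ : 0 < β := by simp only [hβdef]; linarith
  set C₁ : ℝ := T ^ β / β with hC₁def
  have hC₁ : 0 < C₁ := div_pos (Real.rpow_pos_of_pos hT β) hβ
  refine ⟨C₁ / α, div_pos hC₁ hα0, fun s t hs hst htT => ?_⟩
  -- inner integral bound
  have inner_nonneg : ∀ u : ℝ, u ≤ T →
      0 ≤ ∫ v in Set.Ioo 0 u, (T - v) ^ (-α) * (u - v) ^ (2*H - 2) := by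
    intro u hu
    refine setIntegral_nonneg measurableSet_Ioo fun v hv => ?_
    exact mul_nonneg (Real.rpow_nonneg (by linarith [hv.2] : (0:ℝ) ≤ T - v) _)
      (Real.rpow_nonneg (by linarith [hv.2] : (0:ℝ) ≤ u - v) _)
  have inner_le : ∀ u : ℝ, u ∈ Set.Ioo s t →
      (∫ v in Set.Ioo 0 u, (T - v) ^ (-α) * (u - v) ^ (2*H - 2)) ≤ C₁ := by
    intro u hu
    have hu0 : 0 < u := lt_of_le_of_lt hs hu.1
    have huT : u < T := lt_of_lt_of_le hu.2 htT
    have hstep1 : (∫ v in Set.Ioo 0 u, (T - v) ^ (-α) * (u - v) ^ (2*H - 2))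
        ≤ ∫ v in Set.Ioo 0 u, (u - v) ^ (2*H - 2 - α) := by
      refine integral_mono_of_nonneg ?_ ?_ ?_
      · filter_upwards [ae_restrict_mem measurableSet_Ioo] with v hv
        exact mul_nonneg (Real.rpow_nonneg (by linarith [hv.1, hv.2] : (0:ℝ) ≤ T - v) _)
          (Real.rpow_nonneg (by linarith [hv.2] : (0:ℝ) ≤ u - v) _)
      · have h1 : IntervalIntegrable (fun x : ℝ => x ^ (2*H - 2 - α)) volume u 0 :=
          intervalIntegral.intervalIntegrable_rpow' (by linarith)
        have h2 := h1.comp_sub_left u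
        simp only [sub_self, sub_zero] at h2
        have h3 := (intervalIntegrable_iff_integrableOn_Ioc_of_le hu0.le).mp h2
        exact h3.mono_set Set.Ioo_subset_Ioc_self
      · filter_upwards [ae_restrict_mem measurableSet_Ioo] with v hv
        have huv : 0 < u - v := by linarith [hv.2]
        have h1 : (T - v) ^ (-α) ≤ (u - v) ^ (-α) :=
          Real.rpow_le_rpow_of_nonpos huv (by linarith) (by linarith)
        calc (T - v) ^ (-α) * (u - v) ^ (2*H - 2)
            ≤ (u - v) ^ (-α) * (u - v) ^ (2*H - 2) :=
              mul_le_mul_of_nonneg_right h1 (Real.rpow_nonneg huv.le _)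
          _ = (u - v) ^ (2*H - 2 - α) := by
              rw [← Real.rpow_add huv]; ring_nf
    have hstep2 : (∫ v in Set.Ioo 0 u, (u - v) ^ (2*H - 2 - α)) = u ^ β / β := by
      rw [← integral_Ioc_eq_integral_Ioo, ← intervalIntegral.integral_of_le hu0.le,
        intervalIntegral.integral_comp_sub_left (fun x : ℝ => x ^ (2*H - 2 - α)) u]
      simp only [sub_self, sub_zero]
      rw [integral_rpow (Or.inl (by linarith))]
      rw [Real.zero_rpow (by simp only [hβdef] at hβ ⊢; intro h; nlinarith)]
      norm_num
      congr 1 <;> simp only [hβdef] <;> ring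
    have hstep3 : u ^ β / β ≤ C₁ := by
      rw [hC₁def]
      gcongr <;> linarith
    calc (∫ v in Set.Ioo 0 u, (T - v) ^ (-α) * (u - v) ^ (2*H - 2))
        ≤ ∫ v in Set.Ioo 0 u, (u - v) ^ (2*H - 2 - α) := hstep1
      _ = u ^ β / β := hstep2
      _ ≤ C₁ := hstep3
  -- outer bound
  have houter : (∫ u in Set.Ioo s t, (T - u) ^ (α - 1) *
      ∫ v in Set.Ioo 0 u, (T - v) ^ (-α) * (u - v) ^ (2*H - 2))
      ≤ ∫ u in Set.Ioo s t, (T - u) ^ (α - 1) * C₁ := by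
    refine integral_mono_of_nonneg ?_ ?_ ?_
    · filter_upwards [ae_restrict_mem measurableSet_Ioo] with u hu
      exact mul_nonneg (Real.rpow_nonneg (by linarith [hu.2] : (0:ℝ) ≤ T - u) _)
        (inner_nonneg u (by linarith [hu.2]))
    · have h1 : IntervalIntegrable (fun x : ℝ => x ^ (α - 1)) volume (T - s) (T - t) :=
        intervalIntegral.intervalIntegrable_rpow' (by linarith)
      have h2 := h1.comp_sub_left T
      simp only [sub_sub_cancel] at h2
      have h3 := (intervalIntegrable_iff_integrableOn_Ioc_of_le hst).mp h2
      exact (h3.mono_set Set.Ioo_subset_Ioc_self).mul_const C₁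
    · filter_upwards [ae_restrict_mem measurableSet_Ioo] with u hu
      exact mul_le_mul_of_nonneg_left (inner_le u hu)
        (Real.rpow_nonneg (by linarith [hu.2] : (0:ℝ) ≤ T - u) _)
  have hcomp : (∫ u in Set.Ioo s t, (T - u) ^ (α - 1) * C₁)
      = C₁ * (((T - s) ^ α - (T - t) ^ α) / α) := by
    rw [← integral_Ioc_eq_integral_Ioo, ← intervalIntegral.integral_of_le hst]
    rw [intervalIntegral.integral_mul_const,
      intervalIntegral.integral_comp_sub_left (fun x : ℝ => x ^ (α - 1)) T,
      integral_rpow (Or.inl (by linarith))]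
    have : α - 1 + 1 = α := by ring
    rw [this]; ring
  have hsub : (T - s) ^ α - (T - t) ^ α ≤ (t - s) ^ α := by
    have h := rpow_sub_add (T - t) (t - s) α (by linarith) (by linarith) hα0.le
      (by linarith)
    have he : T - t + (t - s) = T - s := by ring
    rw [he] at h
    linarith
  calc (∫ u in Set.Ioo s t, (T - u) ^ (α - 1) *
      ∫ v in Set.Ioo 0 u, (T - v) ^ (-α) * (u - v) ^ (2*H - 2))
      ≤ ∫ u in Set.Ioo s t, (T - u) ^ (α - 1) * C₁ := houter
    _ = C₁ * (((T - s) ^ α - (T - t) ^ α) / α) := hcomp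
    _ ≤ C₁ * ((t - s) ^ α / α) := by
        apply mul_le_mul_of_nonneg_left _ hC₁.le
        gcongr
    _ = C₁ / α * (t - s) ^ α := by ring
end

section
/- Let H ∈ (1/2,1), α ∈ (0, 1−H), and T > 0. Then lim_{t→T⁻} (T−t)^(2−2H−2α) ∫₀ᵗ ∫₀ᵗ (T−s)^(α−1) (T−u)^(α−1) |s−u|^(2H−2) du ds = β(2−α−2H, 2H−1)/(1−H−α). -/
open MeasureTheory Set Filter


lemma betaIntegrableAux {p q : ℝ} (hp : -1 < p) :
    IntegrableOn (fun x => x ^ p * (1 - x) ^ q) (Ioo (0:ℝ) 2⁻¹) := by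
  have hint : IntegrableOn (fun x : ℝ => x ^ p) (Ioo (0:ℝ) 2⁻¹) :=
    (intervalIntegral.integrableOn_Ioo_rpow_iff (by norm_num)).mpr hp
  have h := hint.integrable.bdd_mul (c := max ((2:ℝ)⁻¹ ^ q) 1)
    (f := fun x : ℝ => (1 - x) ^ q) (Measurable.aestronglyMeasurable (by fun_prop)) ?_
  · exact h.congr (Eventually.of_forall fun x => by ring)
  · filter_upwards [ae_restrict_mem measurableSet_Ioo] with x hx
    rw [Real.norm_eq_abs, abs_of_nonneg (Real.rpow_nonneg (by linarith [hx.2]) _)]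
    rcases le_total q 0 with h | h
    · exact le_max_of_le_left
        (Real.rpow_le_rpow_of_nonpos (by norm_num) (by linarith [hx.2]) h)
    · exact le_max_of_le_right (Real.rpow_le_one (by linarith [hx.2]) (by linarith [hx.1]) h)

lemma betaIntegrable {p q : ℝ} (hp : -1 < p) (hq : -1 < q) :
    IntegrableOn (fun x => x ^ p * (1 - x) ^ q) (Ioo (0:ℝ) 1) := by
  rw [← intervalIntegrable_iff_integrableOn_Ioo_of_le (by norm_num)]
  have h1 : IntervalIntegrable (fun x => x ^ p * (1 - x) ^ q) volume 0 2⁻¹ := by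
    rw [intervalIntegrable_iff_integrableOn_Ioo_of_le (by norm_num)]
    exact betaIntegrableAux hp
  have h2 : IntervalIntegrable (fun x => x ^ p * (1 - x) ^ q) volume 2⁻¹ 1 := by
    have base : IntervalIntegrable (fun y : ℝ => y ^ q * (1 - y) ^ p) volume 0 2⁻¹ := by
      rw [intervalIntegrable_iff_integrableOn_Ioo_of_le (by norm_num)]
      exact betaIntegrableAux hq
    have := (base.comp_sub_left 1).symm
    norm_num at this
    have heq : (fun x : ℝ => x ^ p * (1 - x) ^ q) =
        fun x : ℝ => (1 - x) ^ q * x ^ p := by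
      funext x; ring
    rw [heq]
    rwa [show ((1:ℝ)/2) = 2⁻¹ by norm_num] at this

  exact h1.trans h2

lemma lint_support {h : ℝ → ENNReal} {s : Set ℝ} (hs : MeasurableSet s)
    (h0 : ∀ x ∉ s, h x = 0) : ∫⁻ x, h x = ∫⁻ x in s, h x := by
  rw [← lintegral_indicator hs]
  refine lintegral_congr fun x => ?_
  by_cases hx : x ∈ s
  · simp [indicator_of_mem hx]
  · simp [indicator_of_notMem hx, h0 x hx]

lemma iter_region {F : ℝ × ℝ → ENNReal} (hF : Measurable F) {A : Set (ℝ × ℝ)}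
    (hA : MeasurableSet A) (J : ℝ → Set ℝ) (hJ : ∀ x y, (x, y) ∈ A ↔ y ∈ J x) :
    ∫⁻ z in A, F z ∂((volume : Measure ℝ).prod volume) = ∫⁻ x, ∫⁻ y in J x, F (x, y) := by
  rw [← lintegral_indicator hA, lintegral_prod _ (hF.indicator hA).aemeasurable]
  refine lintegral_congr fun x => ?_
  have hJm : MeasurableSet (J x) := by
    have : J x = Prod.mk x ⁻¹' A := by ext y; simp [← hJ x y]
    rw [this]; exact hA.preimage (measurable_prodMk_left)
  rw [← lintegral_indicator hJm]
  refine lintegral_congr fun y => ?_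
  by_cases hy : y ∈ J x
  · rw [indicator_of_mem ((hJ x y).mpr hy), indicator_of_mem hy]
  · rw [indicator_of_notMem (fun h => hy ((hJ x y).mp h)), indicator_of_notMem hy]

lemma iter_region_symm {F : ℝ × ℝ → ENNReal} (hF : Measurable F) {A : Set (ℝ × ℝ)}
    (hA : MeasurableSet A) (I : ℝ → Set ℝ) (hI : ∀ x y, (x, y) ∈ A ↔ x ∈ I y) :
    ∫⁻ z in A, F z ∂((volume : Measure ℝ).prod volume) = ∫⁻ y, ∫⁻ x in I y, F (x, y) := by
  rw [← lintegral_indicator hA, lintegral_prod_symm _ (hF.indicator hA).aemeasurable]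
  refine lintegral_congr fun y => ?_
  have hIm : MeasurableSet (I y) := by
    have : I y = (fun x => (x, y)) ⁻¹' A := by ext x; simp [← hI x y]
    rw [this]; exact hA.preimage (measurable_prodMk_right)
  rw [← lintegral_indicator hIm]
  refine lintegral_congr fun x => ?_
  by_cases hx : x ∈ I y
  · rw [indicator_of_mem ((hI x y).mpr hx), indicator_of_mem hx]
  · rw [indicator_of_notMem (fun h => hx ((hI x y).mp h)), indicator_of_notMem hx]

lemma lint_swap {F : ℝ × ℝ → ENNReal} (hF : Measurable F)
    (hsymm : ∀ z : ℝ × ℝ, F z.swap = F z) {A B : Set (ℝ × ℝ)} (hA : MeasurableSet A)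
    (hpre : Prod.swap ⁻¹' A = B) :
    ∫⁻ z in A, F z ∂((volume : Measure ℝ).prod volume)
      = ∫⁻ z in B, F z ∂((volume : Measure ℝ).prod volume) := by
  rw [← lintegral_indicator hA]
  conv_lhs => rw [show (volume : Measure ℝ).prod volume
    = Measure.map Prod.swap ((volume : Measure ℝ).prod volume) from (Measure.prod_swap).symm]
  rw [lintegral_map (hF.indicator hA) measurable_swap]
  rw [← hpre, ← lintegral_indicator (hA.preimage measurable_swap)]
  refine lintegral_congr fun z => ?_
  by_cases hz : z ∈ Prod.swap ⁻¹' A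
  · rw [indicator_of_mem hz, indicator_of_mem (mem_preimage.mp hz), hsymm]
  · rw [indicator_of_notMem hz, indicator_of_notMem (fun h => hz (mem_preimage.mpr h))]

lemma scale_lintegral {x : ℝ} (hx : 0 < x) {φ : ℝ → ENNReal} (hφ : Measurable φ)
    {S : Set ℝ} (hS : MeasurableSet S) :
    ∫⁻ y in S, φ y = ENNReal.ofReal x * ∫⁻ u in (fun u => x * u) ⁻¹' S, φ (x * u) := by
  have hm : Measure.map (fun u : ℝ => x * u) volume = ENNReal.ofReal |x⁻¹| • volume :=
    Real.map_volume_mul_left (ne_of_gt hx)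
  have h1 : ∫⁻ u in (fun u => x * u) ⁻¹' S, φ (x * u)
      = ∫⁻ y in S, φ y ∂(Measure.map (fun u : ℝ => x * u) volume) :=
    (setLIntegral_map hS hφ (measurable_const_mul x)).symm
  rw [h1, hm, Measure.restrict_smul, lintegral_smul_measure, smul_eq_mul, ← mul_assoc,
    abs_of_pos (inv_pos.mpr hx), ← ENNReal.ofReal_mul hx.le, mul_inv_cancel₀ (ne_of_gt hx)]
  simp

lemma inner_eval (H α : ℝ) {x : ℝ} (hx : 1 < x) :
    ∫⁻ y in Ioo 1 x, ENNReal.ofReal (x ^ (α-1) * y ^ (α-1) * |x - y| ^ (2*H-2)) =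
    ENNReal.ofReal (x ^ (2*α+2*H-3)) *
      ∫⁻ u in Ioo (1/x) 1, ENNReal.ofReal (u ^ (α-1) * (1-u) ^ (2*H-2)) := by
  have hx0 : (0:ℝ) < x := lt_trans one_pos hx
  have hφm : Measurable fun y : ℝ => ENNReal.ofReal (y ^ (α-1) * (x - y) ^ (2*H-2)) := by
    fun_prop
  have step_a : ∫⁻ y in Ioo 1 x, ENNReal.ofReal (x ^ (α-1) * y ^ (α-1) * |x - y| ^ (2*H-2))
      = ∫⁻ y in Ioo 1 x, ENNReal.ofReal (x ^ (α-1)) *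
          ENNReal.ofReal (y ^ (α-1) * (x - y) ^ (2*H-2)) := by
    refine setLIntegral_congr_fun measurableSet_Ioo (fun y hy => ?_)
    rw [abs_of_pos (by linarith [hy.2] : (0:ℝ) < x - y), mul_assoc,
      ENNReal.ofReal_mul (Real.rpow_nonneg hx0.le _)]
  rw [step_a, lintegral_const_mul' _ _ ENNReal.ofReal_ne_top,
    scale_lintegral hx0 hφm measurableSet_Ioo]
  have hpre : (fun u => x * u) ⁻¹' Ioo 1 x = Ioo (1/x) 1 := by
    ext u
    simp only [mem_preimage, mem_Ioo]
    constructor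
    · rintro ⟨h1, h2⟩
      refine ⟨?_, ?_⟩
      · rw [div_lt_iff₀ hx0]; nlinarith
      · nlinarith
    · rintro ⟨h1, h2⟩
      rw [div_lt_iff₀ hx0] at h1
      exact ⟨by nlinarith, by nlinarith⟩
  rw [hpre]
  have step_d : ∫⁻ u in Ioo (1/x) 1, ENNReal.ofReal ((x*u) ^ (α-1) * (x - x*u) ^ (2*H-2))
      = ∫⁻ u in Ioo (1/x) 1, ENNReal.ofReal (x ^ (α-1) * x ^ (2*H-2)) *
          ENNReal.ofReal (u ^ (α-1) * (1-u) ^ (2*H-2)) := by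
    refine setLIntegral_congr_fun measurableSet_Ioo (fun u hu => ?_)
    have hu0 : (0:ℝ) < u := lt_trans (by positivity) hu.1
    rw [show x - x*u = x * (1-u) by ring, Real.mul_rpow hx0.le hu0.le,
      Real.mul_rpow hx0.le (by linarith [hu.2] : (0:ℝ) ≤ 1 - u),
      ← ENNReal.ofReal_mul (by positivity)]
    ring_nf
  rw [step_d, lintegral_const_mul' _ _ ENNReal.ofReal_ne_top, ← mul_assoc, ← mul_assoc,
    ← ENNReal.ofReal_mul (Real.rpow_nonneg hx0.le _),
    ← ENNReal.ofReal_mul (by positivity)]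
  congr 2
  rw [show x ^ (α-1) * x * (x ^ (α-1) * x ^ (2*H-2))
      = x ^ (α-1) * x ^ (1:ℝ) * (x ^ (α-1) * x ^ (2*H-2)) by rw [Real.rpow_one],
    ← Real.rpow_add hx0, ← Real.rpow_add hx0, ← Real.rpow_add hx0]
  ring_nf

lemma quarter_lintegral {H α : ℝ} (hH : 1/2 < H) (hH1 : H < 1)
    (hα0 : 0 < α) (hαH : α < 1 - H) :
    ∫⁻ z in Ioi (1:ℝ) ×ˢ Ioi (1:ℝ),
        ENNReal.ofReal (z.1 ^ (α-1) * z.2 ^ (α-1) * |z.1 - z.2| ^ (2*H-2))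
        ∂((volume : Measure ℝ).prod volume)
      = ENNReal.ofReal
          ((∫ x in Ioo (0:ℝ) 1, x ^ (1 - α - 2*H) * (1-x) ^ (2*H-2)) / (1 - H - α)) := by
  have hαH' : α + H < 1 := by linarith
  have hD : (0:ℝ) < 2 - 2*α - 2*H := by linarith
  have hp : 2*α + 2*H - 3 < -1 := by linarith
  have hFm : Measurable (fun z : ℝ × ℝ =>
      ENNReal.ofReal (z.1 ^ (α-1) * z.2 ^ (α-1) * |z.1 - z.2| ^ (2*H-2))) := by fun_prop
  have hΨm : Measurable (fun q : ℝ × ℝ =>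
      ENNReal.ofReal (q.1 ^ (2*α+2*H-3) * (q.2 ^ (α-1) * (1-q.2) ^ (2*H-2)))) := by fun_prop
  have hR1m : MeasurableSet {p : ℝ × ℝ | 1 < p.2 ∧ p.2 < p.1} :=
    (measurableSet_lt measurable_const measurable_snd).inter
      (measurableSet_lt measurable_snd measurable_fst)
  have hR2m : MeasurableSet {p : ℝ × ℝ | 1 < p.1 ∧ p.1 < p.2} :=
    (measurableSet_lt measurable_const measurable_fst).inter
      (measurableSet_lt measurable_fst measurable_snd)
  have hSm : MeasurableSet {q : ℝ × ℝ | 0 < q.2 ∧ q.2 < 1 ∧ 1/q.2 < q.1} :=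
    (measurableSet_lt measurable_const measurable_snd).inter
      ((measurableSet_lt measurable_snd measurable_const).inter
        (measurableSet_lt (by fun_prop) measurable_fst))
  -- split into two triangles
  have hdiag : ((volume : Measure ℝ).prod volume) {p : ℝ × ℝ | p.1 = p.2} = 0 := by
    have hm : MeasurableSet {p : ℝ × ℝ | p.1 = p.2} :=
      measurableSet_eq_fun measurable_fst measurable_snd
    rw [Measure.prod_apply hm]
    have h0 : ∀ x : ℝ, (volume (Prod.mk x ⁻¹' {p : ℝ × ℝ | p.1 = p.2})) = 0 := by
      intro x
      have : (Prod.mk x ⁻¹' {p : ℝ × ℝ | p.1 = p.2}) = {x} := by ext y; simp [eq_comm]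
      rw [this]; exact measure_singleton x
    simp [h0]
  have hae : (Ioi (1:ℝ) ×ˢ Ioi (1:ℝ) : Set (ℝ × ℝ))
      =ᵐ[((volume : Measure ℝ).prod volume)]
      (({p : ℝ × ℝ | 1 < p.2 ∧ p.2 < p.1} ∪ {p : ℝ × ℝ | 1 < p.1 ∧ p.1 < p.2} : Set (ℝ × ℝ))) := by
    rw [Filter.eventuallyEq_set]
    have h1 : {z : ℝ × ℝ | ¬(z ∈ Ioi (1:ℝ) ×ˢ Ioi (1:ℝ) ↔
        z ∈ ({p : ℝ × ℝ | 1 < p.2 ∧ p.2 < p.1} ∪ {p : ℝ × ℝ | 1 < p.1 ∧ p.1 < p.2}))}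
        ⊆ {p : ℝ × ℝ | p.1 = p.2} := by
      intro z hz
      simp only [mem_setOf_eq, mem_union, mem_prod, mem_Ioi] at hz ⊢
      by_contra hne
      rcases lt_or_gt_of_ne hne with h | h
      · exact hz ⟨fun hmem => Or.inr ⟨hmem.1, h⟩, fun hmem => by
          rcases hmem with ⟨h1, h2⟩ | ⟨h1, h2⟩
          · exact ⟨lt_trans h1 h2, h1⟩
          · exact ⟨h1, lt_trans h1 h2⟩⟩
      · exact hz ⟨fun hmem => Or.inl ⟨hmem.2, h⟩, fun hmem => by
          rcases hmem with ⟨h1, h2⟩ | ⟨h1, h2⟩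
          · exact ⟨lt_trans h1 h2, h1⟩
          · exact ⟨h1, lt_trans h1 h2⟩⟩
    exact measure_mono_null h1 hdiag
  have hdisj : Disjoint {p : ℝ × ℝ | 1 < p.2 ∧ p.2 < p.1} {p : ℝ × ℝ | 1 < p.1 ∧ p.1 < p.2} := by
    rw [Set.disjoint_left]
    rintro p ⟨_, h1⟩ ⟨_, h2⟩
    exact absurd h2 (not_lt.mpr h1.le)
  rw [setLIntegral_congr hae, lintegral_union hR2m hdisj]
  -- symmetry of the two triangles
  have hswap : ∫⁻ z in {p : ℝ × ℝ | 1 < p.1 ∧ p.1 < p.2},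
      ENNReal.ofReal (z.1 ^ (α-1) * z.2 ^ (α-1) * |z.1 - z.2| ^ (2*H-2))
      ∂((volume : Measure ℝ).prod volume)
      = ∫⁻ z in {p : ℝ × ℝ | 1 < p.2 ∧ p.2 < p.1},
      ENNReal.ofReal (z.1 ^ (α-1) * z.2 ^ (α-1) * |z.1 - z.2| ^ (2*H-2))
      ∂((volume : Measure ℝ).prod volume) := by
    refine lint_swap hFm (fun z => ?_) hR2m ?_
    · show ENNReal.ofReal (z.2 ^ (α-1) * z.1 ^ (α-1) * |z.2 - z.1| ^ (2*H-2)) = _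
      rw [abs_sub_comm]; ring_nf
    · ext p; simp only [mem_preimage, mem_setOf_eq, Prod.fst_swap, Prod.snd_swap]
  rw [hswap]
  -- evaluate the lower triangle
  have hR1val : ∫⁻ z in {p : ℝ × ℝ | 1 < p.2 ∧ p.2 < p.1},
      ENNReal.ofReal (z.1 ^ (α-1) * z.2 ^ (α-1) * |z.1 - z.2| ^ (2*H-2))
      ∂((volume : Measure ℝ).prod volume)
      = ENNReal.ofReal ((1/(2 - 2*α - 2*H)) *
          (∫ x in Ioo (0:ℝ) 1, x ^ (1 - α - 2*H) * (1-x) ^ (2*H-2))) := by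
    rw [iter_region hFm hR1m (fun x => Ioo 1 x) (fun x y => Iff.rfl)]
    rw [lint_support measurableSet_Ioi (fun x hx => by
      rw [Set.Ioo_eq_empty (fun h => hx (mem_Ioi.mpr h)), Measure.restrict_empty,
        lintegral_zero_measure])]
    have hstep : ∀ x ∈ Ioi (1:ℝ),
        (∫⁻ y in Ioo 1 x, ENNReal.ofReal (x ^ (α-1) * y ^ (α-1) * |x - y| ^ (2*H-2)))
        = ∫⁻ u in Ioo (1/x) 1,
            ENNReal.ofReal (x ^ (2*α+2*H-3) * (u ^ (α-1) * (1-u) ^ (2*H-2))) := by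
      intro x hx
      rw [inner_eval H α (mem_Ioi.mp hx), ← lintegral_const_mul' _ _ ENNReal.ofReal_ne_top]
      refine setLIntegral_congr_fun measurableSet_Ioo (fun u hu => ?_)
      rw [← ENNReal.ofReal_mul (Real.rpow_nonneg (by linarith [mem_Ioi.mp hx] : (0:ℝ) ≤ x) _)]
    rw [setLIntegral_congr_fun measurableSet_Ioi hstep]
    -- swap the order of integration
    have hiter1 : ∫⁻ z in {q : ℝ × ℝ | 0 < q.2 ∧ q.2 < 1 ∧ 1/q.2 < q.1},
        ENNReal.ofReal (z.1 ^ (2*α+2*H-3) * (z.2 ^ (α-1) * (1-z.2) ^ (2*H-2)))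
        ∂((volume : Measure ℝ).prod volume)
        = ∫⁻ x in Ioi (1:ℝ), ∫⁻ u in Ioo (1/x) 1,
            ENNReal.ofReal (x ^ (2*α+2*H-3) * (u ^ (α-1) * (1-u) ^ (2*H-2))) := by
      rw [iter_region hΨm hSm (fun x => {u | 0 < u ∧ u < 1 ∧ 1/u < x}) (fun x y => Iff.rfl)]
      rw [lint_support measurableSet_Ioi (fun x hx => by
        have hempty : {u : ℝ | 0 < u ∧ u < 1 ∧ 1/u < x} = ∅ := by
          ext u
          simp only [mem_setOf_eq, mem_empty_iff_false, iff_false, not_and]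
          intro hu0 hu1
          rw [div_lt_iff₀ hu0]
          intro hcon
          have hx1 : x ≤ 1 := not_lt.mp (fun h => hx (mem_Ioi.mpr h))
          nlinarith
        rw [hempty, Measure.restrict_empty, lintegral_zero_measure])]
      refine setLIntegral_congr_fun measurableSet_Ioi (fun x hx => ?_)
      have hx1 : (1:ℝ) < x := mem_Ioi.mp hx
      have hx0 : (0:ℝ) < x := lt_trans one_pos hx1
      have hset : {u : ℝ | 0 < u ∧ u < 1 ∧ 1/u < x} = Ioo (1/x) 1 := by
        ext u
        simp only [mem_setOf_eq, mem_Ioo]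
        constructor
        · rintro ⟨hu0, hu1, hux⟩
          rw [div_lt_iff₀ hu0] at hux
          exact ⟨by rw [div_lt_iff₀ hx0]; nlinarith, hu1⟩
        · rintro ⟨h1x, hu1⟩
          have hu0 : (0:ℝ) < u := lt_trans (by positivity) h1x
          rw [div_lt_iff₀ hx0] at h1x
          exact ⟨hu0, hu1, by rw [div_lt_iff₀ hu0]; nlinarith⟩
      rw [hset]
    rw [← hiter1]
    rw [iter_region_symm hΨm hSm (fun y => {x | 0 < y ∧ y < 1 ∧ 1/y < x}) (fun x y => Iff.rfl)]
    rw [lint_support measurableSet_Ioo (fun u hu => by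
      have hempty : {x : ℝ | 0 < u ∧ u < 1 ∧ 1/u < x} = ∅ := by
        ext x
        simp only [mem_setOf_eq, mem_empty_iff_false, iff_false, not_and]
        intro hu0 hu1
        exact absurd (mem_Ioo.mpr ⟨hu0, hu1⟩) hu
      rw [hempty, Measure.restrict_empty, lintegral_zero_measure])]
    have hstep2 : ∀ u ∈ Ioo (0:ℝ) 1,
        (∫⁻ x in {x : ℝ | 0 < u ∧ u < 1 ∧ 1/u < x},
          ENNReal.ofReal (x ^ (2*α+2*H-3) * (u ^ (α-1) * (1-u) ^ (2*H-2))))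
        = ENNReal.ofReal ((1/(2 - 2*α - 2*H)) * (u ^ (1 - α - 2*H) * (1-u) ^ (2*H-2))) := by
      intro u hu
      have hu0 : (0:ℝ) < u := hu.1
      have hu1 : u < 1 := hu.2
      have hc0 : (0:ℝ) < 1/u := by positivity
      have hset : {x : ℝ | 0 < u ∧ u < 1 ∧ 1/u < x} = Ioi (1/u) := by
        ext x; simp [mem_Ioi, hu0, hu1]
      rw [hset]
      have hsplitf : ∀ᵐ x ∂(volume.restrict (Ioi (1/u))),
          ENNReal.ofReal (x ^ (2*α+2*H-3) * (u ^ (α-1) * (1-u) ^ (2*H-2)))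
          = ENNReal.ofReal (x ^ (2*α+2*H-3)) *
            ENNReal.ofReal (u ^ (α-1) * (1-u) ^ (2*H-2)) := by
        filter_upwards [ae_restrict_mem measurableSet_Ioi] with x hx
        rw [ENNReal.ofReal_mul (Real.rpow_nonneg (le_of_lt (lt_trans hc0 hx)) _)]
      rw [lintegral_congr_ae hsplitf, lintegral_mul_const' _ _ ENNReal.ofReal_ne_top]
      have hval : ∫⁻ x in Ioi (1/u), ENNReal.ofReal (x ^ (2*α+2*H-3))
          = ENNReal.ofReal (-(1/u) ^ (2*α+2*H-3+1) / (2*α+2*H-3+1)) := by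
        rw [← ofReal_integral_eq_lintegral_ofReal (integrableOn_Ioi_rpow_of_lt hp hc0)
          (by filter_upwards [ae_restrict_mem measurableSet_Ioi] with x hx
              exact Real.rpow_nonneg (le_of_lt (lt_trans hc0 hx)) _),
          integral_Ioi_rpow_of_lt hp hc0]
      have e1 : (1/u : ℝ) ^ (2*α+2*H-3+1) = u ^ (2-2*α-2*H) := by
        rw [one_div, ← Real.rpow_neg_one u, ← Real.rpow_mul hu0.le]
        congr 1; ring
      have e2 : -(u ^ (2-2*α-2*H)) / (2*α+2*H-3+1)
          = (1/(2-2*α-2*H)) * u ^ (2-2*α-2*H) := by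
        rw [show (2*α+2*H-3+1 : ℝ) = -(2-2*α-2*H) by ring, neg_div_neg_eq]
        ring
      have e3 : u ^ (2-2*α-2*H) * u ^ (α-1) = u ^ (1-α-2*H) := by
        rw [← Real.rpow_add hu0]; congr 1; ring
      rw [hval, e1, e2, ← ENNReal.ofReal_mul
        (mul_nonneg (by positivity) (Real.rpow_nonneg hu0.le _))]
      congr 1
      rw [show (1/(2-2*α-2*H)) * u ^ (2-2*α-2*H) * (u ^ (α-1) * (1-u) ^ (2*H-2))
        = (1/(2-2*α-2*H)) * ((u ^ (2-2*α-2*H) * u ^ (α-1)) * (1-u) ^ (2*H-2)) by ring, e3]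
    rw [setLIntegral_congr_fun measurableSet_Ioo hstep2]
    have hDinv : (0:ℝ) ≤ 1/(2-2*α-2*H) := by positivity
    have hbeta : IntegrableOn (fun u : ℝ => u ^ (1-α-2*H) * (1-u) ^ (2*H-2)) (Ioo (0:ℝ) 1) :=
      betaIntegrable (by linarith) (by linarith)
    have hbetann : 0 ≤ᵐ[volume.restrict (Ioo (0:ℝ) 1)]
        fun u : ℝ => u ^ (1-α-2*H) * (1-u) ^ (2*H-2) := by
      filter_upwards [ae_restrict_mem measurableSet_Ioo] with u hu
      exact mul_nonneg (Real.rpow_nonneg hu.1.le _)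
        (Real.rpow_nonneg (by linarith [hu.2]) _)
    rw [setLIntegral_congr_fun measurableSet_Ioo (fun u hu => by
        rw [ENNReal.ofReal_mul hDinv]),
      lintegral_const_mul' _ _ ENNReal.ofReal_ne_top,
      ← ofReal_integral_eq_lintegral_ofReal hbeta hbetann,
      ← ENNReal.ofReal_mul hDinv]
  rw [hR1val, ← two_mul]
  rw [show (2:ENNReal) = ENNReal.ofReal (2:ℝ) by norm_num,
    ← ENNReal.ofReal_mul (by norm_num)]
  congr 1
  have hfin : (1 - H - α) ≠ 0 := by linarith
  rw [show (2 - 2*α - 2*H : ℝ) = 2 * (1 - H - α) by ring, one_div, mul_inv, ← mul_assoc,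
    ← mul_assoc, mul_inv_cancel₀ (two_ne_zero : (2:ℝ) ≠ 0), one_mul, div_eq_inv_mul]

lemma quarter_nonneg {H α : ℝ} :
    0 ≤ᵐ[((volume : Measure ℝ).prod volume).restrict (Ioi (1:ℝ) ×ˢ Ioi (1:ℝ))]
      (fun z : ℝ × ℝ => z.1 ^ (α-1) * z.2 ^ (α-1) * |z.1 - z.2| ^ (2*H-2)) := by
  filter_upwards [ae_restrict_mem (measurableSet_Ioi.prod measurableSet_Ioi)] with z hz
  have h1 : (0:ℝ) < z.1 := lt_trans one_pos hz.1
  have h2 : (0:ℝ) < z.2 := lt_trans one_pos hz.2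
  exact mul_nonneg (mul_nonneg (Real.rpow_nonneg h1.le _) (Real.rpow_nonneg h2.le _))
    (Real.rpow_nonneg (abs_nonneg _) _)

lemma quarter_integrable {H α : ℝ} (hH : 1/2 < H) (hH1 : H < 1)
    (hα0 : 0 < α) (hαH : α < 1 - H) :
    IntegrableOn (fun z : ℝ × ℝ => z.1 ^ (α-1) * z.2 ^ (α-1) * |z.1 - z.2| ^ (2*H-2))
      (Ioi (1:ℝ) ×ˢ Ioi (1:ℝ)) ((volume : Measure ℝ).prod volume) := by
  constructor
  · exact (Measurable.aestronglyMeasurable (by fun_prop))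
  · rw [hasFiniteIntegral_iff_ofReal quarter_nonneg, quarter_lintegral hH hH1 hα0 hαH]
    exact ENNReal.ofReal_lt_top

lemma quarter_integral {H α : ℝ} (hH : 1/2 < H) (hH1 : H < 1)
    (hα0 : 0 < α) (hαH : α < 1 - H) :
    ∫ z in Ioi (1:ℝ) ×ˢ Ioi (1:ℝ),
        (z.1 ^ (α-1) * z.2 ^ (α-1) * |z.1 - z.2| ^ (2*H-2))
        ∂((volume : Measure ℝ).prod volume)
      = (∫ x in Ioo (0:ℝ) 1, x ^ (1 - α - 2*H) * (1-x) ^ (2*H-2)) / (1 - H - α) := by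
  rw [integral_eq_lintegral_of_nonneg_ae quarter_nonneg
    (Measurable.aestronglyMeasurable (by fun_prop)), quarter_lintegral hH hH1 hα0 hαH,
    ENNReal.toReal_ofReal]
  apply div_nonneg _ (by linarith)
  refine setIntegral_nonneg measurableSet_Ioo fun x hx => ?_
  exact mul_nonneg (Real.rpow_nonneg hx.1.le _) (Real.rpow_nonneg (by linarith [hx.2]) _)

lemma stepB {H α : ℝ} (hH : 1/2 < H) (hH1 : H < 1) (hα0 : 0 < α) (hαH : α < 1 - H) :
    Tendsto (fun r : ℝ => ∫ x in Ioo (1:ℝ) r, ∫ y in Ioo (1:ℝ) r,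
        x ^ (α-1) * y ^ (α-1) * |x - y| ^ (2*H-2)) atTop
      (nhds ((∫ x in Ioo (0:ℝ) 1, x ^ (1 - α - 2*H) * (1-x) ^ (2*H-2)) / (1 - H - α))) := by
  have hint := quarter_integrable hH hH1 hα0 hαH
  have hunion : (⋃ r : ℝ, (Ioo (1:ℝ) r ×ˢ Ioo (1:ℝ) r : Set (ℝ × ℝ)))
      = Ioi (1:ℝ) ×ˢ Ioi (1:ℝ) := by
    ext z
    simp only [mem_iUnion, mem_prod, mem_Ioo, mem_Ioi]
    constructor
    · rintro ⟨r, ⟨h1, _⟩, ⟨h2, _⟩⟩; exact ⟨h1, h2⟩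
    · rintro ⟨h1, h2⟩
      exact ⟨max z.1 z.2 + 1, ⟨h1, lt_of_le_of_lt (le_max_left _ _) (lt_add_one _)⟩,
        ⟨h2, lt_of_le_of_lt (le_max_right _ _) (lt_add_one _)⟩⟩
  have hmono : Monotone (fun r : ℝ => (Ioo (1:ℝ) r ×ˢ Ioo (1:ℝ) r : Set (ℝ × ℝ))) :=
    fun r r' h => Set.prod_mono (Ioo_subset_Ioo_right h) (Ioo_subset_Ioo_right h)
  have htend := tendsto_setIntegral_of_monotone
    (s := fun r : ℝ => (Ioo (1:ℝ) r ×ˢ Ioo (1:ℝ) r : Set (ℝ × ℝ)))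
    (f := fun z : ℝ × ℝ => z.1 ^ (α-1) * z.2 ^ (α-1) * |z.1 - z.2| ^ (2*H-2))
    (μ := (volume : Measure ℝ).prod volume)
    (fun r => measurableSet_Ioo.prod measurableSet_Ioo) hmono (by rw [hunion]; exact hint)
  rw [hunion, quarter_integral hH hH1 hα0 hαH] at htend
  refine htend.congr fun r => ?_
  rw [setIntegral_prod _ (hint.mono_set (Set.prod_mono Ioo_subset_Ioi_self Ioo_subset_Ioi_self))]


lemma stepA (H α T : ℝ) (hT : 0 < T) {t : ℝ} (ht0 : 0 < t) (htT : t < T) :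
    (T - t) ^ (2 - 2*H - 2*α) * ∫ s in Ioo (0:ℝ) t, ∫ u in Ioo (0:ℝ) t,
        (T - s) ^ (α - 1) * (T - u) ^ (α - 1) * |s - u| ^ (2*H - 2)
    = ∫ x in Ioo (1:ℝ) (T/(T-t)), ∫ y in Ioo (1:ℝ) (T/(T-t)),
        x ^ (α-1) * y ^ (α-1) * |x - y| ^ (2*H-2) := by
  set c : ℝ := T - t with hcdef
  have hc : 0 < c := by simp only [hcdef]; linarith
  set r : ℝ := T / c with hrdef
  have hr1 : 1 < r := by
    rw [hrdef, lt_div_iff₀ hc]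
    simp only [hcdef]; linarith
  have key : ∀ F : ℝ → ℝ, ∫ u in Ioo (0:ℝ) t, F u = c * ∫ y in Ioo (1:ℝ) r, F (T - c*y) := by
    intro F
    have h1 : (∫ y in (1:ℝ)..r, F (T - c*y)) = c⁻¹ • ∫ u in (T - c*r)..(T - c*1), F u :=
      intervalIntegral.integral_comp_sub_mul F hc.ne' T
    have e1 : T - c*r = 0 := by
      rw [hrdef, mul_div_cancel₀ _ hc.ne']; ring
    have e2 : T - c*1 = t := by rw [mul_one, hcdef]; ring
    rw [e1, e2] at h1
    have h2 : ∫ u in Ioo (0:ℝ) t, F u = ∫ u in (0:ℝ)..t, F u := by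
      rw [intervalIntegral.integral_of_le ht0.le, integral_Ioc_eq_integral_Ioo]
    have h3 : ∫ y in Ioo (1:ℝ) r, F (T - c*y) = ∫ y in (1:ℝ)..r, F (T - c*y) := by
      rw [intervalIntegral.integral_of_le hr1.le, integral_Ioc_eq_integral_Ioo]
    rw [h2, h3, h1, smul_eq_mul, ← mul_assoc, mul_inv_cancel₀ hc.ne', one_mul]
  rw [key (fun s => ∫ u in Ioo (0:ℝ) t,
    (T - s) ^ (α - 1) * (T - u) ^ (α - 1) * |s - u| ^ (2*H - 2))]
  have hinner : ∀ x ∈ Ioo (1:ℝ) r,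
      (∫ u in Ioo (0:ℝ) t,
        (T - (T - c*x)) ^ (α - 1) * (T - u) ^ (α - 1) * |(T - c*x) - u| ^ (2*H - 2))
      = (c * (c ^ (α-1) * (c ^ (α-1) * c ^ (2*H-2)))) *
          ∫ y in Ioo (1:ℝ) r, x ^ (α-1) * y ^ (α-1) * |x - y| ^ (2*H-2) := by
    intro x hx
    have hx0 : (0:ℝ) < x := lt_trans one_pos hx.1
    rw [key (fun u => (T - (T - c*x)) ^ (α - 1) * (T - u) ^ (α - 1)
      * |(T - c*x) - u| ^ (2*H - 2))]
    have hcong : ∀ y ∈ Ioo (1:ℝ) r,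
        (T - (T - c*x)) ^ (α - 1) * (T - (T - c*y)) ^ (α - 1)
          * |(T - c*x) - (T - c*y)| ^ (2*H - 2)
        = (c ^ (α-1) * (c ^ (α-1) * c ^ (2*H-2)))
            * (x ^ (α-1) * y ^ (α-1) * |x - y| ^ (2*H-2)) := by
      intro y hy
      have hy0 : (0:ℝ) < y := lt_trans one_pos hy.1
      rw [show T - (T - c*x) = c*x by ring, show T - (T - c*y) = c*y by ring,
        show (T - c*x) - (T - c*y) = c*(y-x) by ring,
        abs_mul, abs_of_pos hc, abs_sub_comm y x,
        Real.mul_rpow hc.le hx0.le, Real.mul_rpow hc.le hy0.le,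
        Real.mul_rpow hc.le (abs_nonneg _)]
      ring
    rw [setIntegral_congr_fun measurableSet_Ioo hcong, integral_const_mul _ _]
    ring
  rw [setIntegral_congr_fun measurableSet_Ioo hinner, integral_const_mul _ _]
  rw [← mul_assoc, ← mul_assoc]
  have hone : c ^ (2 - 2*H - 2*α) * c * (c * (c ^ (α-1) * (c ^ (α-1) * c ^ (2*H-2)))) = 1 := by
    rw [show c ^ (2 - 2*H - 2*α) * c * (c * (c ^ (α-1) * (c ^ (α-1) * c ^ (2*H-2))))
      = c ^ (2 - 2*H - 2*α) * (c ^ (1:ℝ) * (c ^ (1:ℝ) * (c ^ (α-1) * (c ^ (α-1) * c ^ (2*H-2)))))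
      by rw [Real.rpow_one]; ring,
      ← Real.rpow_add hc, ← Real.rpow_add hc, ← Real.rpow_add hc, ← Real.rpow_add hc,
      ← Real.rpow_add hc]
    rw [show (2 - 2*H - 2*α) + (1 + (1 + ((α-1) + ((α-1) + (2*H-2))))) = (0:ℝ) by ring]
    exact Real.rpow_zero c
  rw [show (T - t) ^ (2 - 2*H - 2*α) * c * (c * (c ^ (α-1) * (c ^ (α-1) * c ^ (2*H-2))))
    = c ^ (2 - 2*H - 2*α) * c * (c * (c ^ (α-1) * (c ^ (α-1) * c ^ (2*H-2)))) by rw [hcdef],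
    hone, one_mul]

theorem stmt10 (H α T : ℝ) (hH : 1/2 < H) (hH1 : H < 1)
    (hα : α ∈ Set.Ioo (0:ℝ) (1 - H)) (hT : 0 < T) :
    Filter.Tendsto (fun t : ℝ =>
      (T - t) ^ (2 - 2*H - 2*α) * ∫ s in Set.Ioo (0:ℝ) t, ∫ u in Set.Ioo (0:ℝ) t,
        (T - s) ^ (α - 1) * (T - u) ^ (α - 1) * |s - u| ^ (2*H - 2))
      (nhdsWithin T (Set.Iio T))
      (nhds ((∫ x in Set.Ioo (0:ℝ) 1,
        x ^ (2 - α - 2*H - 1) * (1 - x) ^ (2*H - 1 - 1)) / (1 - H - α))) := by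
  obtain ⟨hα0, hαH⟩ := hα
  have hB := stepB hH hH1 hα0 hαH
  have hcomp : Tendsto (fun t : ℝ => T / (T - t)) (nhdsWithin T (Iio T)) atTop := by
    have h1 : Tendsto (fun t : ℝ => T - t) (nhdsWithin T (Iio T)) (nhdsWithin 0 (Ioi 0)) := by
      apply tendsto_nhdsWithin_of_tendsto_nhds_of_eventually_within
      · have : Tendsto (fun t : ℝ => T - t) (nhds T) (nhds (T - T)) :=
          (continuous_const.sub continuous_id).tendsto T
        rw [sub_self] at this
        exact this.mono_left nhdsWithin_le_nhds
      · filter_upwards [self_mem_nhdsWithin] with t ht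
        exact mem_Ioi.mpr (by linarith [mem_Iio.mp ht])
    have h2 : Tendsto (fun x : ℝ => T / x) (nhdsWithin 0 (Ioi 0)) atTop := by
      have := tendsto_inv_nhdsGT_zero.const_mul_atTop hT
      refine this.congr fun x => ?_
      rw [div_eq_mul_inv]
    exact h2.comp h1
  have hmain := hB.comp hcomp
  rw [show (∫ x in Set.Ioo (0:ℝ) 1, x ^ (2 - α - 2*H - 1) * (1 - x) ^ (2*H - 1 - 1))
    = ∫ x in Set.Ioo (0:ℝ) 1, x ^ (1 - α - 2*H) * (1 - x) ^ (2*H - 2) by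
      congr 1; funext x; rw [show (2 - α - 2*H - 1 : ℝ) = 1 - α - 2*H by ring,
        show (2*H - 1 - 1 : ℝ) = 2*H - 2 by ring]]
  refine Tendsto.congr' ?_ hmain
  filter_upwards [self_mem_nhdsWithin,
    mem_nhdsWithin_of_mem_nhds (Ioi_mem_nhds hT)] with t ht1 ht2
  exact (stepA H α T hT (mem_Ioi.mp ht2) (mem_Iio.mp ht1)).symm
end

section
/- Let H ∈ (1/2,1), α ∈ (0,H), and T > 0. Then ∫₀ᵀ ∫₀ᵀ (T−u)^(−α) (T−v)^(−α) |v−u|^(2H−2) dv du = (T^(2H−2α)/(H−α)) β(1−α, 2H−1), where β is the Beta function. -/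
open MeasureTheory Set intervalIntegral

lemma aux_ii (p q c : ℝ) (hp : -1 < p) (hq : -1 < q) (hc : 0 < c) :
    IntervalIntegrable (fun x => x ^ p * (c - x) ^ q) volume 0 c := by
  have h1 : IntervalIntegrable (fun x => x ^ p * (c - x) ^ q) volume 0 (c/2) := by
    apply (intervalIntegrable_rpow' hp).mul_continuousOn
    apply ContinuousOn.rpow_const
    · exact (continuous_const.sub continuous_id).continuousOn
    · intro x hx
      left
      rw [uIcc_of_le (by linarith)] at hx
      have : x ≤ c/2 := hx.2
      intro h; linarith [sub_eq_zero.mp h]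
  have h2 : IntervalIntegrable (fun x => x ^ p * (c - x) ^ q) volume (c/2) c := by
    have hb : IntervalIntegrable (fun x => (c - x) ^ q) volume (c/2) c := by
      have := ((intervalIntegrable_rpow' (a := 0) (b := c/2) hq).comp_sub_left c).symm
      rw [show c - c/2 = c/2 by ring, sub_zero] at this
      exact this
    apply hb.continuousOn_mul
    apply ContinuousOn.rpow_const continuousOn_id
    intro x hx
    left
    rw [uIcc_of_le (by linarith)] at hx
    have h2 : c/2 ≤ x := hx.1
    simp only [id]
    intro h; rw [h] at h2; linarith
  exact h1.trans h2

lemma aux_scale (p q u : ℝ) (hu : 0 < u) :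
    ∫ v in Ioo 0 u, v ^ p * (u - v) ^ q
      = u ^ (p + q + 1) * ∫ x in (0:ℝ)..1, x ^ p * (1 - x) ^ q := by
  rw [← integral_Ioc_eq_integral_Ioo, ← intervalIntegral.integral_of_le hu.le]
  have h := intervalIntegral.integral_comp_mul_left (a := 0) (b := 1)
    (fun x => x ^ p * (u - x) ^ q) hu.ne'
  rw [mul_zero, mul_one] at h
  have h2 : ∫ x in (0:ℝ)..1, (fun x => x ^ p * (u - x) ^ q) (u * x)
      = ∫ x in (0:ℝ)..1, u ^ (p + q) * (x ^ p * (1 - x) ^ q) := by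
    apply intervalIntegral.integral_congr
    intro x hx
    rw [uIcc_of_le zero_le_one] at hx
    simp only
    have hx0 : 0 ≤ x := hx.1
    have hx1 : 0 ≤ 1 - x := by linarith [hx.2]
    rw [show u - u * x = u * (1 - x) by ring, Real.mul_rpow hu.le hx0,
      Real.mul_rpow hu.le hx1, Real.rpow_add hu]
    ring
  rw [h2, intervalIntegral.integral_const_mul] at h
  have := congrArg (fun z => u • z) h
  simp only [smul_smul, mul_inv_cancel₀ hu.ne', one_smul] at this
  rw [← this]
  rw [show u ^ (p+q+1) = u * u ^ (p+q) by rw [Real.rpow_add hu, Real.rpow_one]; ring]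
  rw [smul_eq_mul]; ring

lemma aux_reflect (T : ℝ) (hT : 0 < T) (f : ℝ → ℝ) :
    ∫ x in Ioo 0 T, f (T - x) = ∫ x in Ioo 0 T, f x := by
  rw [← integral_Ioc_eq_integral_Ioo, ← integral_Ioc_eq_integral_Ioo,
    ← intervalIntegral.integral_of_le hT.le, ← intervalIntegral.integral_of_le hT.le,
    intervalIntegral.integral_comp_sub_left f T, sub_self, sub_zero]

lemma aux_diag_null : (volume.prod volume) {p : ℝ × ℝ | p.1 = p.2} = 0 := by
  have hm : MeasurableSet {p : ℝ × ℝ | p.1 = p.2} :=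
    measurableSet_eq_fun measurable_fst measurable_snd
  rw [Measure.prod_apply hm]
  have : ∀ x : ℝ, (volume : Measure ℝ) (Prod.mk x ⁻¹' {p : ℝ × ℝ | p.1 = p.2}) = 0 := by
    intro x
    have : (Prod.mk x ⁻¹' {p : ℝ × ℝ | p.1 = p.2}) = {x} := by
      ext y; simp [eq_comm]
    rw [this]; exact measure_singleton x
  simp [this]

lemma aux_le_ae_lt : {p : ℝ × ℝ | p.1 ≤ p.2} =ᶠ[ae (volume.prod volume)] {p : ℝ × ℝ | p.1 < p.2} := by
  rw [Filter.eventuallyEq_set]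
  have h : ∀ᵐ p : ℝ × ℝ ∂(volume.prod volume), p.1 ≠ p.2 := by
    rw [MeasureTheory.ae_iff]
    have : {a : ℝ × ℝ | ¬a.1 ≠ a.2} = {p : ℝ × ℝ | p.1 = p.2} := by
      ext p; simp [not_not]
    rw [this]
    exact aux_diag_null
  filter_upwards [h] with p hp
  exact ⟨fun h' => lt_of_le_of_ne h' hp, le_of_lt⟩

lemma aux_A (H α T : ℝ) (hH : 1/2 < H) (hH1 : H < 1)
    (hα0 : 0 < α) (hαH : α < H) (hT : 0 < T) :
    (∫⁻ u in Ioo (0:ℝ) T, ∫⁻ v in Ioo (0:ℝ) T,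
        ENNReal.ofReal (u ^ (-α) * v ^ (-α) * |u - v| ^ (2*H - 2)))
      = ENNReal.ofReal ((T ^ (2*H - 2*α) / (H - α)) *
          ∫ x in (0:ℝ)..1, x ^ (-α) * (1 - x) ^ (2*H - 2)) := by
  set B : ℝ := ∫ x in (0:ℝ)..1, x ^ (-α) * (1 - x) ^ (2*H - 2) with hBdef
  have hB : 0 ≤ B := by
    apply intervalIntegral.integral_nonneg zero_le_one
    intro x hx
    exact mul_nonneg (Real.rpow_nonneg hx.1 _) (Real.rpow_nonneg (by linarith [hx.2]) _)
  set G : ℝ × ℝ → ENNReal :=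
    fun p => ENNReal.ofReal (p.1 ^ (-α) * p.2 ^ (-α) * |p.1 - p.2| ^ (2*H - 2)) with hGdef
  have hGm : Measurable G := by
    apply Measurable.ennreal_ofReal
    exact ((measurable_fst.pow_const _).mul (measurable_snd.pow_const _)).mul
      (((measurable_fst.sub measurable_snd).abs).pow_const _)
  have hGsymm : ∀ p : ℝ × ℝ, G (Prod.swap p) = G p := by
    intro p
    simp only [hGdef, Prod.swap, Prod.fst, Prod.snd]
    congr 1
    rw [abs_sub_comm]
    ring
  set sq : Set (ℝ × ℝ) := Ioo (0:ℝ) T ×ˢ Ioo (0:ℝ) T with hsqdef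
  have hsqm : MeasurableSet sq := measurableSet_Ioo.prod measurableSet_Ioo
  set Lt : Set (ℝ × ℝ) := {p : ℝ × ℝ | p.2 < p.1} with hLtdef
  have hLtm : MeasurableSet Lt := measurableSet_lt measurable_snd measurable_fst
  set A1 : Set (ℝ × ℝ) := Lt ∩ sq with hA1def
  have hA1m : MeasurableSet A1 := hLtm.inter hsqm
  -- triangle value
  have htri : ∫⁻ p in A1, G p ∂(volume.prod volume)
      = ENNReal.ofReal ((T ^ (2*H - 2*α) / (2*H - 2*α)) * B) := by
    have hstep : ∫⁻ p in A1, G p ∂(volume.prod volume)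
        = ∫⁻ u in Ioo (0:ℝ) T, ∫⁻ v in Ioo (0:ℝ) u, G (u, v) := by
      rw [← lintegral_indicator hA1m]
      rw [lintegral_prod _ (hGm.indicator hA1m).aemeasurable]
      rw [← lintegral_indicator (measurableSet_Ioo (a := (0:ℝ)) (b := T))]
      apply lintegral_congr
      intro u
      by_cases hu : u ∈ Ioo (0:ℝ) T
      · rw [indicator_of_mem hu, ← lintegral_indicator (measurableSet_Ioo (a := (0:ℝ)) (b := u))]
        apply lintegral_congr
        intro v
        by_cases hv : v ∈ Ioo (0:ℝ) u
        · rw [indicator_of_mem hv]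
          apply indicator_of_mem
          exact ⟨hv.2, hu, ⟨hv.1, hv.2.trans hu.2⟩⟩
        · rw [indicator_of_notMem hv]
          apply indicator_of_notMem
          intro hmem
          exact hv ⟨hmem.2.2.1, hmem.1⟩
      · rw [indicator_of_notMem hu]
        have : ∀ v : ℝ, A1.indicator G (u, v) = 0 := by
          intro v
          apply indicator_of_notMem
          intro hmem
          exact hu hmem.2.1
        simp [this]
    rw [hstep]
    have hinner : ∀ u ∈ Ioo (0:ℝ) T,
        (∫⁻ v in Ioo (0:ℝ) u, G (u, v)) = ENNReal.ofReal (u ^ (2*H - 1 - 2*α) * B) := by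
      intro u hu
      have hu0 : 0 < u := hu.1
      have heq : ∫⁻ v in Ioo (0:ℝ) u, G (u, v)
          = ∫⁻ v in Ioo (0:ℝ) u, ENNReal.ofReal (u ^ (-α) * (v ^ (-α) * (u - v) ^ (2*H - 2))) := by
        apply setLIntegral_congr_fun (measurableSet_Ioo (a := (0:ℝ)) (b := u))
        intro v hv
        simp only [hGdef]
        rw [abs_of_pos (sub_pos.mpr hv.2), mul_assoc]
      rw [heq]
      have hint : IntegrableOn (fun v => u ^ (-α) * (v ^ (-α) * (u - v) ^ (2*H - 2)))
          (Ioo 0 u) volume := by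
        apply Integrable.const_mul
        have := (aux_ii (-α) (2*H - 2) u (by linarith) (by linarith) hu0)
        rw [intervalIntegrable_iff_integrableOn_Ioc_of_le hu0.le] at this
        exact this.mono_set Ioo_subset_Ioc_self
      rw [← ofReal_integral_eq_lintegral_ofReal hint]
      · congr 1
        rw [MeasureTheory.integral_const_mul, aux_scale _ _ _ hu0]
        rw [← hBdef, ← mul_assoc, ← Real.rpow_add hu0,
          show -α + (-α + (2*H - 2) + 1) = 2*H - 1 - 2*α by ring]
      · apply ae_restrict_of_forall_mem (measurableSet_Ioo (a := (0:ℝ)) (b := u))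
        intro v hv
        exact mul_nonneg (Real.rpow_nonneg hu0.le _)
          (mul_nonneg (Real.rpow_nonneg hv.1.le _) (Real.rpow_nonneg (by linarith [hv.2]) _))
    rw [setLIntegral_congr_fun (measurableSet_Ioo (a := (0:ℝ)) (b := T))
      hinner]
    have hint2 : IntegrableOn (fun u : ℝ => u ^ (2*H - 1 - 2*α) * B) (Ioo 0 T) volume := by
      have := (intervalIntegrable_rpow' (a := 0) (b := T) (r := 2*H - 1 - 2*α)
        (by linarith)).mul_const B
      rw [intervalIntegrable_iff_integrableOn_Ioc_of_le hT.le] at this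
      exact this.mono_set Ioo_subset_Ioc_self
    rw [← ofReal_integral_eq_lintegral_ofReal hint2]
    · congr 1
      rw [MeasureTheory.integral_mul_const, ← integral_Ioc_eq_integral_Ioo,
        ← intervalIntegral.integral_of_le hT.le,
        integral_rpow (Or.inl (by linarith)),
        show 2*H - 1 - 2*α + 1 = 2*H - 2*α by ring,
        Real.zero_rpow (by intro h; nlinarith : (2*H - 2*α) ≠ 0), sub_zero]
    · apply ae_restrict_of_forall_mem (measurableSet_Ioo (a := (0:ℝ)) (b := T))
      intro u hu
      exact mul_nonneg (Real.rpow_nonneg hu.1.le _) hB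
  -- swap
  have hswap : ∫⁻ p in ({p : ℝ × ℝ | p.1 < p.2} ∩ sq), G p ∂(volume.prod volume)
      = ∫⁻ p in A1, G p ∂(volume.prod volume) := by
    have hemb : MeasurableEmbedding (Prod.swap : ℝ × ℝ → ℝ × ℝ) :=
      MeasurableEquiv.prodComm.measurableEmbedding
    have hmp : MeasurePreserving (Prod.swap : ℝ × ℝ → ℝ × ℝ)
        (volume.prod volume) (volume.prod volume) := Measure.measurePreserving_swap
    have h := hmp.setLIntegral_comp_preimage_emb hemb G A1
    have hpre : (Prod.swap : ℝ × ℝ → ℝ × ℝ) ⁻¹' A1 = {p : ℝ × ℝ | p.1 < p.2} ∩ sq := by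
      ext p
      simp only [hA1def, hLtdef, hsqdef, mem_preimage, mem_inter_iff, mem_setOf_eq,
        mem_prod, Prod.fst_swap, Prod.snd_swap]
      tauto
    rw [hpre] at h
    rw [← h]
    apply lintegral_congr
    intro p
    exact (hGsymm p).symm
  -- assemble
  have hiter : (∫⁻ u in Ioo (0:ℝ) T, ∫⁻ v in Ioo (0:ℝ) T,
      ENNReal.ofReal (u ^ (-α) * v ^ (-α) * |u - v| ^ (2*H - 2)))
      = ∫⁻ p in sq, G p ∂(volume.prod volume) := by
    rw [show sq = Ioo (0:ℝ) T ×ˢ Ioo (0:ℝ) T from rfl, ← Measure.prod_restrict,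
      lintegral_prod _ hGm.aemeasurable]
  rw [hiter]
  have hsplit := lintegral_add_compl (μ := (volume.prod volume).restrict sq) G hLtm
  rw [Measure.restrict_restrict hLtm, Measure.restrict_restrict hLtm.compl] at hsplit
  have hc : Ltᶜ = {p : ℝ × ℝ | p.1 ≤ p.2} := by
    ext p; simp [hLtdef, not_lt]
  have hcongr : (volume.prod volume).restrict (Ltᶜ ∩ sq)
      = (volume.prod volume).restrict ({p : ℝ × ℝ | p.1 < p.2} ∩ sq) := by
    apply Measure.restrict_congr_set
    rw [hc]
    exact aux_le_ae_lt.inter (Filter.EventuallyEq.refl _ _)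
  rw [hcongr] at hsplit
  have hX : 0 ≤ T ^ (2*H - 2*α) / (2*H - 2*α) * B := by
    apply mul_nonneg _ hB
    apply div_nonneg (Real.rpow_nonneg hT.le _) (by linarith)
  rw [← hsplit, htri, hswap, htri, ← ENNReal.ofReal_add hX hX]
  congr 1
  have hne : H - α ≠ 0 := by intro h; linarith
  have h2 : 2*H - 2*α = 2*(H - α) := by ring
  rw [h2]
  field_simp
  ring

theorem stmt12 (H α T : ℝ) (hH : 1/2 < H) (hH1 : H < 1)
    (hα : α ∈ Set.Ioo (0:ℝ) H) (hT : 0 < T) :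
    (∫ u in Set.Ioo (0:ℝ) T, ∫ v in Set.Ioo (0:ℝ) T,
      (T - u) ^ (-α) * (T - v) ^ (-α) * |v - u| ^ (2*H - 2))
    = (T ^ (2*H - 2*α) / (H - α)) *
        ∫ x in Set.Ioo (0:ℝ) 1, x ^ (1 - α - 1) * (1 - x) ^ (2*H - 1 - 1) := by
  obtain ⟨hα0, hαH⟩ := hα
  have hα1 : α < 1 := by linarith
  -- rewrite RHS beta integral
  have hRHS : (∫ x in Set.Ioo (0:ℝ) 1, x ^ (1 - α - 1) * (1 - x) ^ (2*H - 1 - 1))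
      = ∫ x in (0:ℝ)..1, x ^ (-α) * (1 - x) ^ (2*H - 2) := by
    simp only [show (1:ℝ) - α - 1 = -α by ring, show 2*H - 1 - 1 = 2*H - 2 by ring]
    rw [← integral_Ioc_eq_integral_Ioo, ← intervalIntegral.integral_of_le zero_le_one]
  set B : ℝ := ∫ x in (0:ℝ)..1, x ^ (-α) * (1 - x) ^ (2*H - 2) with hBdef
  have hB : 0 ≤ B := by
    apply intervalIntegral.integral_nonneg zero_le_one
    intro x hx
    exact mul_nonneg (Real.rpow_nonneg hx.1 _) (Real.rpow_nonneg (by linarith [hx.2]) _)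
  rw [hRHS]
  -- reflection of inner integrals
  have hinner : ∀ u : ℝ,
      (∫ v in Set.Ioo (0:ℝ) T, (T - u) ^ (-α) * (T - v) ^ (-α) * |v - u| ^ (2*H - 2))
      = ∫ v in Set.Ioo (0:ℝ) T, (T - u) ^ (-α) * v ^ (-α) * |(T - u) - v| ^ (2*H - 2) := by
    intro u
    have hr := aux_reflect T hT
      (fun w => (T - u) ^ (-α) * w ^ (-α) * |(T - u) - w| ^ (2*H - 2))
    rw [← hr]
    apply setIntegral_congr_fun measurableSet_Ioo
    intro v _
    simp only
    rw [show (T - u) - (T - v) = v - u by ring]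
  rw [setIntegral_congr_fun measurableSet_Ioo (fun u _ => hinner u)]
  -- reflection of outer integral
  have hout := aux_reflect T hT
    (fun s => ∫ v in Set.Ioo (0:ℝ) T, s ^ (-α) * v ^ (-α) * |s - v| ^ (2*H - 2))
  rw [hout]
  -- convert to lintegral
  have key := aux_A H α T hH hH1 hα0 hαH hT
  set L : ℝ → ENNReal := fun u =>
    ∫⁻ v in Set.Ioo (0:ℝ) T, ENNReal.ofReal (u ^ (-α) * v ^ (-α) * |u - v| ^ (2*H - 2))
    with hLdef
  have hLm : Measurable L := by
    apply Measurable.lintegral_prod_right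
    apply Measurable.ennreal_ofReal
    exact ((measurable_fst.pow_const _).mul (measurable_snd.pow_const _)).mul
      (((measurable_fst.sub measurable_snd).abs).pow_const _)
  have hstep1 : (∫ u in Set.Ioo (0:ℝ) T,
      ∫ v in Set.Ioo (0:ℝ) T, u ^ (-α) * v ^ (-α) * |u - v| ^ (2*H - 2))
      = ∫ u in Set.Ioo (0:ℝ) T, (L u).toReal := by
    apply setIntegral_congr_fun measurableSet_Ioo
    intro u hu
    apply integral_eq_lintegral_of_nonneg_ae
    · apply ae_restrict_of_forall_mem measurableSet_Ioo
      intro v hv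
      exact mul_nonneg (mul_nonneg (Real.rpow_nonneg hu.1.le _) (Real.rpow_nonneg hv.1.le _))
        (Real.rpow_nonneg (abs_nonneg _) _)
    · apply Measurable.aestronglyMeasurable
      exact ((measurable_const.mul (measurable_id.pow_const _)).mul
        (((measurable_const.sub measurable_id).abs).pow_const _))
  rw [hstep1]
  have hstep2 : (∫ u in Set.Ioo (0:ℝ) T, (L u).toReal)
      = (∫⁻ u in Set.Ioo (0:ℝ) T, L u).toReal := by
    apply integral_toReal hLm.aemeasurable
    apply ae_lt_top hLm
    rw [key]
    exact ENNReal.ofReal_ne_top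
  rw [hstep2, key, ENNReal.toReal_ofReal]
  apply mul_nonneg _ hB
  apply div_nonneg (Real.rpow_nonneg hT.le _) (by linarith)
end

section
/- Let H ∈ (1/2,1), α ≥ H, and T > 0. Then (T−t)^(2α−1) ∫₀ᵗ ∫₀ᵗ (T−u)^(−α) (T−v)^(−α) |v−u|^(2H−2) dv du → 0 as t → T⁻. -/
set_option maxHeartbeats 1000000

open MeasureTheory Set Filter

namespace Stmt13Aux

lemma intOn_left {p d A B : ℝ} (hAB : A ≤ B)
    (h : -1 < p ∨ B < d) : IntegrableOn (fun v => (d - v) ^ p) (Ioo A B) := by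
  have hbase : IntervalIntegrable (fun x : ℝ => x ^ p) volume (d - B) (d - A) := by
    rcases h with h | h
    · exact intervalIntegral.intervalIntegrable_rpow' h
    · refine intervalIntegral.intervalIntegrable_rpow (Or.inr ?_)
      exact Set.notMem_uIcc_of_lt (by linarith) (by linarith)
  have h2 : IntervalIntegrable (fun v : ℝ => (d - v) ^ p) volume
      (d - (d - B)) (d - (d - A)) := hbase.comp_sub_left d
  simp only [sub_sub_cancel] at h2
  exact (intervalIntegrable_iff_integrableOn_Ioo_of_le hAB).mp h2.symm

lemma intOn_right {p d A B : ℝ} (hAB : A ≤ B) (hp : -1 < p) :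
    IntegrableOn (fun v => (v - d) ^ p) (Ioo A B) := by
  have hbase : IntervalIntegrable (fun x : ℝ => x ^ p) volume (A - d) (B - d) :=
    intervalIntegral.intervalIntegrable_rpow' hp
  have h2 : IntervalIntegrable (fun v : ℝ => (v - d) ^ p) volume
      (A - d + d) (B - d + d) := hbase.comp_sub_right d
  simp only [sub_add_cancel] at h2
  exact (intervalIntegrable_iff_integrableOn_Ioo_of_le hAB).mp h2

lemma intOn_abs {p u A B : ℝ} (hAB : A ≤ B) (hp : -1 < p) :
    IntegrableOn (fun v => |v - u| ^ p) (Ioo A B) := by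
  have h1 : IntegrableOn (fun v => |v - u| ^ p) (Ioo A B ∩ Iic u) := by
    refine IntegrableOn.congr_fun
      (IntegrableOn.mono_set (intOn_left (d := u) hAB (Or.inl hp)) inter_subset_left) ?_
      (measurableSet_Ioo.inter measurableSet_Iic)
    intro v hv
    have h2 : v ≤ u := hv.2
    show (u - v) ^ p = |v - u| ^ p
    rw [abs_sub_comm, abs_of_nonneg (by linarith : (0:ℝ) ≤ u - v)]
  have h2 : IntegrableOn (fun v => |v - u| ^ p) (Ioo A B ∩ Ioi u) := by
    refine IntegrableOn.congr_fun
      (IntegrableOn.mono_set (intOn_right (d := u) hAB hp) inter_subset_left) ?_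
      (measurableSet_Ioo.inter measurableSet_Ioi)
    intro v hv
    have h2 : u < v := hv.2
    show (v - u) ^ p = |v - u| ^ p
    rw [abs_of_nonneg (by linarith : (0:ℝ) ≤ v - u)]
  have := h1.union h2
  rwa [← inter_union_distrib_left, Iic_union_Ioi, inter_univ] at this

lemma int_left {p d A B : ℝ} (hAB : A ≤ B) (hBd : B ≤ d)
    (h : -1 < p ∨ (p ≠ -1 ∧ B < d)) :
    ∫ v in Ioo A B, (d - v) ^ p = ((d - A) ^ (p+1) - (d - B) ^ (p+1)) / (p+1) := by
  rw [← integral_Ioc_eq_integral_Ioo, ← intervalIntegral.integral_of_le hAB,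
    intervalIntegral.integral_comp_sub_left (fun x => x ^ p) d,
    integral_rpow]
  rcases h with h | h
  · exact Or.inl h
  · exact Or.inr ⟨h.1, Set.notMem_uIcc_of_lt (by linarith [h.2]) (by linarith [h.2])⟩

lemma int_right {p d A B : ℝ} (hAB : A ≤ B) (hdA : d ≤ A) (hp : -1 < p) :
    ∫ v in Ioo A B, (v - d) ^ p = ((B - d) ^ (p+1) - (A - d) ^ (p+1)) / (p+1) := by
  rw [← integral_Ioc_eq_integral_Ioo, ← intervalIntegral.integral_of_le hAB,
    intervalIntegral.integral_comp_sub_right (fun x => x ^ p) d,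
    integral_rpow (Or.inl hp)]

lemma int_abs {p u A B : ℝ} (hAu : A < u) (huB : u < B) (hp : -1 < p) :
    ∫ v in Ioo A B, |v - u| ^ p = ((u - A) ^ (p+1) + (B - u) ^ (p+1)) / (p+1) := by
  have hsplit : Ioo A B = Ioo A u ∪ Ico u B := by
    ext v
    simp only [mem_Ioo, mem_union, mem_Ico]
    constructor
    · rintro ⟨h1, h2⟩
      rcases lt_or_ge v u with h | h
      · exact Or.inl ⟨h1, h⟩
      · exact Or.inr ⟨h, h2⟩
    · rintro (⟨h1, h2⟩ | ⟨h1, h2⟩)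
      · exact ⟨h1, h2.trans huB⟩
      · exact ⟨hAu.trans_le h1, h2⟩
  have hdisj : Disjoint (Ioo A u) (Ico u B) := by
    refine Set.disjoint_left.mpr ?_
    rintro v ⟨_, h2⟩ ⟨h3, _⟩
    exact absurd h3 (not_le.mpr h2)
  have hp1 : (0:ℝ) < p + 1 := by linarith
  have hz : (0:ℝ) ^ (p+1) = 0 := Real.zero_rpow (ne_of_gt hp1)
  rw [hsplit, setIntegral_union hdisj measurableSet_Ico (intOn_abs hAu.le hp)
    ((integrableOn_Ico_iff_integrableOn_Ioo).mpr (intOn_abs huB.le hp))]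
  have e1 : ∫ v in Ioo A u, |v - u| ^ p = ((u - A) ^ (p+1) - (u - u) ^ (p+1)) / (p+1) := by
    rw [setIntegral_congr_fun measurableSet_Ioo (g := fun v => (u - v) ^ p) ?_]
    · exact int_left hAu.le le_rfl (Or.inl hp)
    · intro v hv
      show |v - u| ^ p = (u - v) ^ p
      rw [abs_sub_comm, abs_of_nonneg (by linarith [hv.2] : (0:ℝ) ≤ u - v)]
  have e2 : ∫ v in Ico u B, |v - u| ^ p = ((B - u) ^ (p+1) - (u - u) ^ (p+1)) / (p+1) := by
    rw [integral_Ico_eq_integral_Ioo,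
      setIntegral_congr_fun measurableSet_Ioo (g := fun v => (v - u) ^ p) ?_]
    · exact int_right huB.le le_rfl hp
    · intro v hv
      show |v - u| ^ p = (v - u) ^ p
      rw [abs_of_nonneg (by linarith [hv.1] : (0:ℝ) ≤ v - u)]
  rw [e1, e2, sub_self, hz]
  ring

end Stmt13Aux

namespace Stmt13Aux2
open Stmt13Aux Real

lemma half_rpow {x : ℝ} (c : ℝ) (hx : 0 ≤ x) : (x/2) ^ c = 2 ^ (-c) * x ^ c := by
  rw [Real.div_rpow hx (by norm_num), Real.rpow_neg (by norm_num)]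
  rw [div_eq_mul_inv, mul_comm]

lemma one_le_rt2 : (1:ℝ) ≤ 2 ^ ((1:ℝ)/2) := by
  calc (1:ℝ) = 2 ^ (0:ℝ) := (Real.rpow_zero 2).symm
  _ ≤ 2 ^ ((1:ℝ)/2) := Real.rpow_le_rpow_of_exponent_le one_le_two (by norm_num)

lemma rpow_add_eq {x : ℝ} (hx : 0 < x) {a b c : ℝ} (h : a + b = c) :
    x ^ a * x ^ b = x ^ c := by rw [← Real.rpow_add hx, h]

lemma heart {H T t u v : ℝ} (hH : 1/2 < H) (hH1 : H < 1) (htT : t < T)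
    (hu : u ∈ Ioo 0 t) (hv : v ∈ Ioo 0 t) :
    (T - v) ^ (-H) * |v - u| ^ (2*H - 2) ≤
      (if v < (u + T)/2 then 2 ^ ((1:ℝ)/2) * (T - u) ^ (-(1/2) : ℝ) * |v - u| ^ (H - 3/2)
      else 2 ^ (2 - 2*H) * (T - u) ^ (2*H - 2) * (T - v) ^ (-H)) := by
  obtain ⟨hu0, hut⟩ := hu
  obtain ⟨hv0, hvt⟩ := hv
  have hx : (0:ℝ) < T - u := by linarith
  have ha : (0:ℝ) < T - v := by linarith
  by_cases hvm : v < (u + T)/2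
  · rw [if_pos hvm]
    rcases lt_trichotomy v u with hlt | heq | hgt
    · -- v < u
      have hb : (0:ℝ) < u - v := by linarith
      have habs : |v - u| = u - v := by
        rw [abs_sub_comm]; exact abs_of_pos hb
      have k1 : (T - v) ^ (-H) = (T - v) ^ (-(1/2):ℝ) * (T - v) ^ (1/2 - H) :=
        (rpow_add_eq ha (by ring)).symm
      have k2 : (T - v) ^ (-(1/2):ℝ) ≤ (T - u) ^ (-(1/2):ℝ) :=
        Real.rpow_le_rpow_of_nonpos hx (by linarith) (by norm_num)
      have k3 : (T - v) ^ (1/2 - H) ≤ (u - v) ^ (1/2 - H) :=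
        Real.rpow_le_rpow_of_nonpos hb (by linarith) (by linarith)
      have k4 : (u - v) ^ (1/2 - H) * (u - v) ^ (2*H - 2) = (u - v) ^ (H - 3/2) :=
        rpow_add_eq hb (by ring)
      calc (T - v) ^ (-H) * |v - u| ^ (2*H - 2)
          = ((T - v) ^ (-(1/2):ℝ) * (T - v) ^ (1/2 - H)) * (u - v) ^ (2*H - 2) := by
            rw [k1, habs]
        _ ≤ ((T - u) ^ (-(1/2):ℝ) * (u - v) ^ (1/2 - H)) * (u - v) ^ (2*H - 2) := by
            apply mul_le_mul_of_nonneg_right _ (Real.rpow_nonneg hb.le _)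
            exact mul_le_mul k2 k3 (Real.rpow_nonneg ha.le _) (Real.rpow_nonneg hx.le _)
        _ = (T - u) ^ (-(1/2):ℝ) * (u - v) ^ (H - 3/2) := by rw [mul_assoc, k4]
        _ ≤ 2 ^ ((1:ℝ)/2) * (T - u) ^ (-(1/2):ℝ) * |v - u| ^ (H - 3/2) := by
            rw [habs]
            nlinarith [one_le_rt2, Real.rpow_nonneg hx.le (-(1/2):ℝ),
              Real.rpow_nonneg hb.le (H - 3/2),
              mul_nonneg (Real.rpow_nonneg hx.le (-(1/2):ℝ)) (Real.rpow_nonneg hb.le (H - 3/2))]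
    · -- v = u
      subst heq
      have h0 : |v - v| = 0 := by simp
      rw [h0, Real.zero_rpow (ne_of_lt (by linarith) : 2*H - 2 ≠ 0),
        Real.zero_rpow (ne_of_lt (by linarith) : H - 3/2 ≠ 0)]
      simp
    · -- u < v
      have hb : (0:ℝ) < v - u := by linarith
      have habs : |v - u| = v - u := abs_of_pos hb
      have hba : v - u < (T - u)/2 := by linarith
      have haa : (T - u)/2 < T - v := by linarith
      have hhalf : (0:ℝ) < (T - u)/2 := by linarith
      have k1 : (T - v) ^ (-H) ≤ ((T - u)/2) ^ (-H) :=
        Real.rpow_le_rpow_of_nonpos hhalf haa.le (by linarith)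
      have k2 : (v - u) ^ (2*H - 2) = (v - u) ^ (H - 3/2) * (v - u) ^ (H - 1/2) :=
        (rpow_add_eq hb (by ring)).symm
      have k3 : (v - u) ^ (H - 1/2) ≤ ((T - u)/2) ^ (H - 1/2) :=
        Real.rpow_le_rpow hb.le hba.le (by linarith)
      have k4 : ((T - u)/2) ^ (-H) * ((T - u)/2) ^ (H - 1/2) = ((T - u)/2) ^ (-(1/2):ℝ) :=
        rpow_add_eq hhalf (by ring)
      calc (T - v) ^ (-H) * |v - u| ^ (2*H - 2)
          = (T - v) ^ (-H) * ((v - u) ^ (H - 3/2) * (v - u) ^ (H - 1/2)) := by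
            rw [habs, k2]
        _ ≤ ((T - u)/2) ^ (-H) * ((v - u) ^ (H - 3/2) * ((T - u)/2) ^ (H - 1/2)) := by
            apply mul_le_mul k1 _ (mul_nonneg (Real.rpow_nonneg hb.le _) (Real.rpow_nonneg hb.le _))
              (Real.rpow_nonneg hhalf.le _)
            exact mul_le_mul_of_nonneg_left k3 (Real.rpow_nonneg hb.le _)
        _ = ((T - u)/2) ^ (-(1/2):ℝ) * (v - u) ^ (H - 3/2) := by
            rw [← k4]; ring
        _ = 2 ^ ((1:ℝ)/2) * (T - u) ^ (-(1/2):ℝ) * |v - u| ^ (H - 3/2) := by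
            rw [habs, half_rpow _ hx.le, neg_neg]
  · rw [if_neg hvm]
    push_neg at hvm
    have hb : (T - u)/2 ≤ v - u := by linarith
    have hb0 : (0:ℝ) < v - u := by linarith
    have habs : |v - u| = v - u := abs_of_pos hb0
    have k1 : (v - u) ^ (2*H - 2) ≤ ((T - u)/2) ^ (2*H - 2) :=
      Real.rpow_le_rpow_of_nonpos (by linarith) hb (by linarith)
    have k2 : ((T - u)/2) ^ (2*H - 2) = 2 ^ (2 - 2*H) * (T - u) ^ (2*H - 2) := by
      rw [half_rpow _ hx.le]; ring_nf
    calc (T - v) ^ (-H) * |v - u| ^ (2*H - 2)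
        ≤ (T - v) ^ (-H) * (2 ^ (2 - 2*H) * (T - u) ^ (2*H - 2)) := by
          rw [habs]
          exact mul_le_mul_of_nonneg_left (k1.trans_eq k2) (Real.rpow_nonneg ha.le _)
      _ = 2 ^ (2 - 2*H) * (T - u) ^ (2*H - 2) * (T - v) ^ (-H) := by ring


lemma inner_bound {H α T t u : ℝ} (hH : 1/2 < H) (hH1 : H < 1) (hα : H ≤ α)
    (ht : 0 < t) (htT : t < T) (hu : u ∈ Ioo 0 t) :
    ∫ v in Ioo 0 t, (T - v) ^ (-α) * |v - u| ^ (2*H - 2) ≤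
      (T - t) ^ (H - α) *
        ((2 ^ ((1:ℝ)/2) * (2 * T ^ (H - 1/2)) / (H - 1/2)
          + 2 ^ (2 - 2*H) * T ^ (H - 1/2) / (1 - H)) * (T - u) ^ (-(1/2) : ℝ)) := by
  obtain ⟨hu0, hut⟩ := hu
  have hx : (0:ℝ) < T - u := by linarith
  have hε : (0:ℝ) < T - t := by linarith
  have hT0 : (0:ℝ) < T := by linarith
  have hum : u < (u + T)/2 := by linarith
  have hmT : (u + T)/2 < T := by linarith
  have hm0 : (0:ℝ) < (u + T)/2 := by linarith
  have hεn : (0:ℝ) ≤ (T - t) ^ (H - α) := Real.rpow_nonneg hε.le _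
  -- notation
  set S1 : Set ℝ := Ioo 0 t ∩ Iio ((u + T)/2) with hS1def
  set S2 : Set ℝ := Ioo 0 t ∩ Ici ((u + T)/2) with hS2def
  have hS1m : MeasurableSet S1 := measurableSet_Ioo.inter measurableSet_Iio
  have hS2m : MeasurableSet S2 := measurableSet_Ioo.inter measurableSet_Ici
  have hsetsplit : Ioo (0:ℝ) t = S1 ∪ S2 := by
    rw [hS1def, hS2def, ← inter_union_distrib_left, Iio_union_Ici, inter_univ]
  have hdisj : Disjoint S1 S2 := by
    refine Set.disjoint_left.mpr ?_
    rintro v ⟨_, h1⟩ ⟨_, h2⟩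
    exact absurd (Set.mem_Ici.mp h2) (not_le.mpr (Set.mem_Iio.mp h1))
  -- bounding functions
  set b1 : ℝ → ℝ := fun v =>
    (T - t) ^ (H - α) * (2 ^ ((1:ℝ)/2) * (T - u) ^ (-(1/2) : ℝ) * |v - u| ^ (H - 3/2)) with hb1def
  set b2 : ℝ → ℝ := fun v =>
    (T - t) ^ (H - α) * (2 ^ (2 - 2*H) * (T - u) ^ (2*H - 2) * (T - v) ^ (-H)) with hb2def
  have hb1nn : ∀ v : ℝ, 0 ≤ b1 v := fun v => by
    rw [hb1def]
    exact mul_nonneg hεn (mul_nonneg (mul_nonneg (Real.rpow_nonneg (by norm_num) _)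
      (Real.rpow_nonneg hx.le _)) (Real.rpow_nonneg (abs_nonneg _) _))
  have hb2nn : ∀ v ∈ Ioo (0:ℝ) T, 0 ≤ b2 v := fun v hv => by
    rw [hb2def]
    have : (0:ℝ) < T - v := by linarith [hv.2]
    exact mul_nonneg hεn (mul_nonneg (mul_nonneg (Real.rpow_nonneg (by norm_num) _)
      (Real.rpow_nonneg hx.le _)) (Real.rpow_nonneg this.le _))
  -- pointwise bounds
  have hpt : ∀ v ∈ Ioo (0:ℝ) t,
      (T - v) ^ (-α) * |v - u| ^ (2*H - 2) ≤
        (T - t) ^ (H - α) * ((T - v) ^ (-H) * |v - u| ^ (2*H - 2)) := by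
    intro v hv
    have ha : (0:ℝ) < T - v := by linarith [hv.2]
    have e1 : (T - v) ^ (-α) = (T - v) ^ (H - α) * (T - v) ^ (-H) :=
      (rpow_add_eq ha (by ring)).symm
    have e2 : (T - v) ^ (H - α) ≤ (T - t) ^ (H - α) :=
      Real.rpow_le_rpow_of_nonpos hε (by linarith [hv.2]) (by linarith)
    calc (T - v) ^ (-α) * |v - u| ^ (2*H - 2)
        = (T - v) ^ (H - α) * ((T - v) ^ (-H) * |v - u| ^ (2*H - 2)) := by
          rw [e1]; ring
      _ ≤ (T - t) ^ (H - α) * ((T - v) ^ (-H) * |v - u| ^ (2*H - 2)) := by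
          refine mul_le_mul_of_nonneg_right e2 ?_
          exact mul_nonneg (Real.rpow_nonneg ha.le _) (Real.rpow_nonneg (abs_nonneg _) _)
  have hpt1 : ∀ v ∈ S1, (T - v) ^ (-α) * |v - u| ^ (2*H - 2) ≤ b1 v := by
    intro v hv
    have h1 := hpt v hv.1
    have h2 := heart hH hH1 htT ⟨hu0, hut⟩ hv.1
    rw [if_pos (Set.mem_Iio.mp hv.2)] at h2
    rw [hb1def]
    exact h1.trans (mul_le_mul_of_nonneg_left h2 hεn)
  have hpt2 : ∀ v ∈ S2, (T - v) ^ (-α) * |v - u| ^ (2*H - 2) ≤ b2 v := by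
    intro v hv
    have h1 := hpt v hv.1
    have h2 := heart hH hH1 htT ⟨hu0, hut⟩ hv.1
    rw [if_neg (not_lt.mpr (Set.mem_Ici.mp hv.2))] at h2
    rw [hb2def]
    exact h1.trans (mul_le_mul_of_nonneg_left h2 hεn)
  -- measurability of the integrand
  have hFmeas : Measurable fun v : ℝ => (T - v) ^ (-α) * |v - u| ^ (2*H - 2) :=
    ((measurable_const.sub measurable_id).pow measurable_const).mul
      (((measurable_id.sub measurable_const).abs).pow measurable_const)
  -- integrability of the bounds
  have hb1int : IntegrableOn b1 (Ioo 0 ((u + T)/2)) := by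
    have base : IntegrableOn (fun v : ℝ => |v - u| ^ (H - 3/2)) (Ioo 0 ((u + T)/2)) :=
      intOn_abs hm0.le (by linarith)
    refine IntegrableOn.congr_fun (base.const_mul
      ((T - t) ^ (H - α) * (2 ^ ((1:ℝ)/2) * (T - u) ^ (-(1/2) : ℝ)))) ?_ measurableSet_Ioo
    intro v _
    show _ = b1 v
    rw [hb1def]
    ring
  have hb2int : IntegrableOn b2 (Ioo u T) := by
    have base : IntegrableOn (fun v : ℝ => (T - v) ^ (-H)) (Ioo u T) :=
      intOn_left (by linarith) (Or.inl (by linarith))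
    refine IntegrableOn.congr_fun (base.const_mul
      ((T - t) ^ (H - α) * (2 ^ (2 - 2*H) * (T - u) ^ (2*H - 2)))) ?_ measurableSet_Ioo
    intro v _
    show _ = b2 v
    rw [hb2def]
    ring
  -- integrability of F on the pieces
  have hFint1 : IntegrableOn (fun v : ℝ => (T - v) ^ (-α) * |v - u| ^ (2*H - 2)) S1 := by
    refine Integrable.mono' (hb1int.mono_set ?_) hFmeas.aestronglyMeasurable ?_
    · rintro v ⟨⟨h1, _⟩, h2⟩; exact ⟨h1, Set.mem_Iio.mp h2⟩
    · refine (ae_restrict_iff' hS1m).2 (Filter.Eventually.of_forall fun v hv => ?_)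
      have ha : (0:ℝ) < T - v := by linarith [hv.1.2]
      rw [Real.norm_eq_abs, abs_of_nonneg (mul_nonneg (Real.rpow_nonneg ha.le _)
        (Real.rpow_nonneg (abs_nonneg _) _))]
      exact hpt1 v hv
  have hFint2 : IntegrableOn (fun v : ℝ => (T - v) ^ (-α) * |v - u| ^ (2*H - 2)) S2 := by
    refine Integrable.mono' (hb2int.mono_set ?_) hFmeas.aestronglyMeasurable ?_
    · rintro v ⟨⟨_, h1⟩, h2⟩
      exact ⟨lt_of_lt_of_le hum (Set.mem_Ici.mp h2), by linarith⟩
    · refine (ae_restrict_iff' hS2m).2 (Filter.Eventually.of_forall fun v hv => ?_)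
      have ha : (0:ℝ) < T - v := by linarith [hv.1.2]
      rw [Real.norm_eq_abs, abs_of_nonneg (mul_nonneg (Real.rpow_nonneg ha.le _)
        (Real.rpow_nonneg (abs_nonneg _) _))]
      exact hpt2 v hv
  -- split the integral
  have hsplit : ∫ v in Ioo (0:ℝ) t, (T - v) ^ (-α) * |v - u| ^ (2*H - 2) =
      (∫ v in S1, (T - v) ^ (-α) * |v - u| ^ (2*H - 2)) +
        ∫ v in S2, (T - v) ^ (-α) * |v - u| ^ (2*H - 2) := by
    have := setIntegral_union hdisj hS2m hFint1 hFint2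
      (f := fun v : ℝ => (T - v) ^ (-α) * |v - u| ^ (2*H - 2)) (μ := volume)
    rwa [← hsetsplit] at this
  -- estimate piece 1
  have hest1 : ∫ v in S1, (T - v) ^ (-α) * |v - u| ^ (2*H - 2) ≤
      (T - t) ^ (H - α) *
        (2 ^ ((1:ℝ)/2) * (2 * T ^ (H - 1/2)) / (H - 1/2) * (T - u) ^ (-(1/2) : ℝ)) := by
    have s1 : ∫ v in S1, (T - v) ^ (-α) * |v - u| ^ (2*H - 2) ≤ ∫ v in S1, b1 v :=
      setIntegral_mono_on hFint1 (hb1int.mono_set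
        (fun v hv => ⟨hv.1.1, Set.mem_Iio.mp hv.2⟩)) hS1m hpt1
    have s2 : ∫ v in S1, b1 v ≤ ∫ v in Ioo (0:ℝ) ((u + T)/2), b1 v := by
      refine setIntegral_mono_set hb1int ?_ ?_
      · exact (ae_restrict_iff' measurableSet_Ioo).2
          (Filter.Eventually.of_forall fun v _ => hb1nn v)
      · exact HasSubset.Subset.eventuallyLE (fun v hv => ⟨hv.1.1, Set.mem_Iio.mp hv.2⟩)
    have s3 : ∫ v in Ioo (0:ℝ) ((u + T)/2), b1 v =
        (T - t) ^ (H - α) * (2 ^ ((1:ℝ)/2) * (T - u) ^ (-(1/2) : ℝ) *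
          ((u ^ (H - 1/2) + ((u + T)/2 - u) ^ (H - 1/2)) / (H - 1/2))) := by
      rw [hb1def]
      simp only [mul_assoc]
      rw [integral_const_mul, integral_const_mul, integral_const_mul]
      rw [int_abs hu0 hum (by linarith : (-1:ℝ) < H - 3/2),
        (show H - 3/2 + 1 = H - 1/2 by ring), sub_zero]
    have s4 : (u ^ (H - 1/2) + ((u + T)/2 - u) ^ (H - 1/2)) / (H - 1/2) ≤
        (2 * T ^ (H - 1/2)) / (H - 1/2) := by
      have h1 : u ^ (H - 1/2) ≤ T ^ (H - 1/2) :=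
        Real.rpow_le_rpow hu0.le (by linarith) (by linarith)
      have h2 : ((u + T)/2 - u) ^ (H - 1/2) ≤ T ^ (H - 1/2) :=
        Real.rpow_le_rpow (by linarith) (by linarith) (by linarith)
      exact div_le_div_of_nonneg_right (by linarith) (by linarith)
    calc ∫ v in S1, (T - v) ^ (-α) * |v - u| ^ (2*H - 2) ≤ ∫ v in Ioo (0:ℝ) ((u + T)/2), b1 v :=
          s1.trans s2
      _ = (T - t) ^ (H - α) * (2 ^ ((1:ℝ)/2) * (T - u) ^ (-(1/2) : ℝ) *
            ((u ^ (H - 1/2) + ((u + T)/2 - u) ^ (H - 1/2)) / (H - 1/2))) := s3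
      _ ≤ (T - t) ^ (H - α) * (2 ^ ((1:ℝ)/2) * (T - u) ^ (-(1/2) : ℝ) *
            ((2 * T ^ (H - 1/2)) / (H - 1/2))) := by
          refine mul_le_mul_of_nonneg_left (mul_le_mul_of_nonneg_left s4 ?_) hεn
          exact mul_nonneg (Real.rpow_nonneg (by norm_num) _) (Real.rpow_nonneg hx.le _)
      _ = (T - t) ^ (H - α) *
            (2 ^ ((1:ℝ)/2) * (2 * T ^ (H - 1/2)) / (H - 1/2) * (T - u) ^ (-(1/2) : ℝ)) := by
          ring
  -- estimate piece 2
  have hest2 : ∫ v in S2, (T - v) ^ (-α) * |v - u| ^ (2*H - 2) ≤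
      (T - t) ^ (H - α) *
        (2 ^ (2 - 2*H) * T ^ (H - 1/2) / (1 - H) * (T - u) ^ (-(1/2) : ℝ)) := by
    have s1 : ∫ v in S2, (T - v) ^ (-α) * |v - u| ^ (2*H - 2) ≤ ∫ v in S2, b2 v :=
      setIntegral_mono_on hFint2 (hb2int.mono_set
        (fun v hv => ⟨lt_of_lt_of_le hum (Set.mem_Ici.mp hv.2), by linarith [hv.1.2]⟩)) hS2m hpt2
    have s2 : ∫ v in S2, b2 v ≤ ∫ v in Ioo u T, b2 v := by
      refine setIntegral_mono_set hb2int ?_ ?_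
      · refine (ae_restrict_iff' measurableSet_Ioo).2
          (Filter.Eventually.of_forall fun v hv => hb2nn v ⟨by linarith [hv.1], hv.2⟩)
      · exact HasSubset.Subset.eventuallyLE
          (fun v hv => ⟨lt_of_lt_of_le hum (Set.mem_Ici.mp hv.2), by linarith [hv.1.2]⟩)
    have s3 : ∫ v in Ioo u T, b2 v =
        (T - t) ^ (H - α) * (2 ^ (2 - 2*H) * (T - u) ^ (2*H - 2) *
          (((T - u) ^ (1 - H) - 0 ^ (1 - H)) / (1 - H))) := by
      rw [hb2def]
      simp only [mul_assoc]
      rw [integral_const_mul, integral_const_mul, integral_const_mul]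
      rw [int_left (by linarith : u ≤ T) le_rfl (Or.inl (by linarith : (-1:ℝ) < -H)),
        (show -H + 1 = 1 - H by ring), sub_self]
    have s4 : (T - u) ^ (2*H - 2) * ((T - u) ^ (1 - H) / (1 - H)) ≤
        T ^ (H - 1/2) / (1 - H) * (T - u) ^ (-(1/2) : ℝ) := by
      have e1 : (T - u) ^ (2*H - 2) * (T - u) ^ (1 - H) = (T - u) ^ (H - 1 : ℝ) :=
        rpow_add_eq hx (by ring)
      have e2 : (T - u) ^ (H - 1 : ℝ) = (T - u) ^ (H - 1/2) * (T - u) ^ (-(1/2) : ℝ) :=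
        (rpow_add_eq hx (by ring)).symm
      have e3 : (T - u) ^ (H - 1/2) ≤ T ^ (H - 1/2) :=
        Real.rpow_le_rpow hx.le (by linarith) (by linarith)
      calc (T - u) ^ (2*H - 2) * ((T - u) ^ (1 - H) / (1 - H))
          = ((T - u) ^ (2*H - 2) * (T - u) ^ (1 - H)) / (1 - H) := by ring
        _ = ((T - u) ^ (H - 1/2) * (T - u) ^ (-(1/2) : ℝ)) / (1 - H) := by rw [e1, e2]
        _ ≤ (T ^ (H - 1/2) * (T - u) ^ (-(1/2) : ℝ)) / (1 - H) := by
            refine div_le_div_of_nonneg_right ?_ (by linarith)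
            exact mul_le_mul_of_nonneg_right e3 (Real.rpow_nonneg hx.le _)
        _ = T ^ (H - 1/2) / (1 - H) * (T - u) ^ (-(1/2) : ℝ) := by ring
    calc ∫ v in S2, (T - v) ^ (-α) * |v - u| ^ (2*H - 2) ≤ ∫ v in Ioo u T, b2 v := s1.trans s2
      _ = (T - t) ^ (H - α) * (2 ^ (2 - 2*H) * (T - u) ^ (2*H - 2) *
            (((T - u) ^ (1 - H) - 0 ^ (1 - H)) / (1 - H))) := s3
      _ = (T - t) ^ (H - α) * (2 ^ (2 - 2*H) *
            ((T - u) ^ (2*H - 2) * ((T - u) ^ (1 - H) / (1 - H)))) := by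
          rw [Real.zero_rpow (by linarith : (1:ℝ) - H ≠ 0), sub_zero]; ring
      _ ≤ (T - t) ^ (H - α) * (2 ^ (2 - 2*H) *
            (T ^ (H - 1/2) / (1 - H) * (T - u) ^ (-(1/2) : ℝ))) := by
          refine mul_le_mul_of_nonneg_left (mul_le_mul_of_nonneg_left s4 ?_) hεn
          exact Real.rpow_nonneg (by norm_num) _
      _ = (T - t) ^ (H - α) *
            (2 ^ (2 - 2*H) * T ^ (H - 1/2) / (1 - H) * (T - u) ^ (-(1/2) : ℝ)) := by
          ring
  rw [hsplit]
  calc (∫ v in S1, (T - v) ^ (-α) * |v - u| ^ (2*H - 2)) +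
        ∫ v in S2, (T - v) ^ (-α) * |v - u| ^ (2*H - 2) ≤
      (T - t) ^ (H - α) *
          (2 ^ ((1:ℝ)/2) * (2 * T ^ (H - 1/2)) / (H - 1/2) * (T - u) ^ (-(1/2) : ℝ)) +
        (T - t) ^ (H - α) *
          (2 ^ (2 - 2*H) * T ^ (H - 1/2) / (1 - H) * (T - u) ^ (-(1/2) : ℝ)) :=
      add_le_add hest1 hest2
    _ = (T - t) ^ (H - α) *
        ((2 ^ ((1:ℝ)/2) * (2 * T ^ (H - 1/2)) / (H - 1/2)
          + 2 ^ (2 - 2*H) * T ^ (H - 1/2) / (1 - H)) * (T - u) ^ (-(1/2) : ℝ)) := by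
      ring

end Stmt13Aux2

namespace Stmt13Aux3
open Stmt13Aux Stmt13Aux2

lemma sub_div_neg_le {A B c : ℝ} (hA : 0 ≤ A) (hc : 0 < c) : (A - B) / (-c) ≤ B / c := by
  rw [div_neg, ← neg_div, neg_sub]
  exact div_le_div_of_nonneg_right (sub_le_self _ hA) hc.le

end Stmt13Aux3

open Stmt13Aux Stmt13Aux2 Stmt13Aux3 in
theorem stmt13 (H α T : ℝ) (hH : 1/2 < H) (hH1 : H < 1)
    (hα : H ≤ α) (hT : 0 < T) :
    Filter.Tendsto (fun t : ℝ =>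
      (T - t) ^ (2*α - 1) * ∫ u in Set.Ioo (0:ℝ) t, ∫ v in Set.Ioo (0:ℝ) t,
        (T - u) ^ (-α) * (T - v) ^ (-α) * |v - u| ^ (2*H - 2))
      (nhdsWithin T (Set.Iio T)) (nhds 0) := by
  set C : ℝ := 2 ^ ((1:ℝ)/2) * (2 * T ^ (H - 1/2)) / (H - 1/2)
          + 2 ^ (2 - 2*H) * T ^ (H - 1/2) / (1 - H) with hC
  have hα2 : 1/2 < α := lt_of_lt_of_le hH hα
  have hCnn : 0 ≤ C := by
    rw [hC]
    have n1 : (0:ℝ) ≤ 2 ^ ((1:ℝ)/2) * (2 * T ^ (H - 1/2)) :=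
      mul_nonneg (Real.rpow_nonneg (by norm_num) _)
        (mul_nonneg (by norm_num) (Real.rpow_nonneg hT.le _))
    have n2 : (0:ℝ) ≤ 2 ^ (2 - 2*H) * T ^ (H - 1/2) :=
      mul_nonneg (Real.rpow_nonneg (by norm_num) _) (Real.rpow_nonneg hT.le _)
    have d1 : (0:ℝ) < H - 1/2 := by linarith
    have d2 : (0:ℝ) < 1 - H := by linarith
    exact add_nonneg (div_nonneg n1 d1.le) (div_nonneg n2 d2.le)
  have nonneg : ∀ t : ℝ, t < T → 0 ≤
      (T - t) ^ (2*α - 1) * ∫ u in Set.Ioo (0:ℝ) t, ∫ v in Set.Ioo (0:ℝ) t,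
        (T - u) ^ (-α) * (T - v) ^ (-α) * |v - u| ^ (2*H - 2) := by
    intro t htT
    refine mul_nonneg (Real.rpow_nonneg (by linarith) _) ?_
    refine setIntegral_nonneg measurableSet_Ioo fun u hu => ?_
    refine setIntegral_nonneg measurableSet_Ioo fun v hv => ?_
    have h1 : (0:ℝ) < T - u := by linarith [hu.2]
    have h2 : (0:ℝ) < T - v := by linarith [hv.2]
    exact mul_nonneg (mul_nonneg (Real.rpow_nonneg h1.le _) (Real.rpow_nonneg h2.le _))
      (Real.rpow_nonneg (abs_nonneg _) _)
  have key : ∀ t ∈ Set.Ioo (T/2) T,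
      (T - t) ^ (2*α - 1) * (∫ u in Set.Ioo (0:ℝ) t, ∫ v in Set.Ioo (0:ℝ) t,
        (T - u) ^ (-α) * (T - v) ^ (-α) * |v - u| ^ (2*H - 2)) ≤
        C / (α - 1/2) * (T - t) ^ (H - 1/2) := by
    intro t ht
    obtain ⟨ht2, htT⟩ := ht
    have ht0 : 0 < t := by linarith
    have hε : (0:ℝ) < T - t := by linarith
    have houter : (∫ u in Set.Ioo (0:ℝ) t, ∫ v in Set.Ioo (0:ℝ) t,
        (T - u) ^ (-α) * (T - v) ^ (-α) * |v - u| ^ (2*H - 2)) ≤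
        ∫ u in Set.Ioo (0:ℝ) t, ((T - t) ^ (H - α) * C) * (T - u) ^ (-α + -(1/2) : ℝ) := by
      refine integral_mono_of_nonneg ?_ ?_ ?_
      · refine (ae_restrict_iff' measurableSet_Ioo).2 (Filter.Eventually.of_forall
          fun u hu => ?_)
        refine setIntegral_nonneg measurableSet_Ioo fun v hv => ?_
        have h1 : (0:ℝ) < T - u := by linarith [hu.2]
        have h2 : (0:ℝ) < T - v := by linarith [hv.2]
        exact mul_nonneg (mul_nonneg (Real.rpow_nonneg h1.le _) (Real.rpow_nonneg h2.le _))
          (Real.rpow_nonneg (abs_nonneg _) _)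
      · exact (intOn_left ht0.le (Or.inr htT)).const_mul _
      · refine (ae_restrict_iff' measurableSet_Ioo).2 (Filter.Eventually.of_forall
          fun u hu => ?_)
        have hx : (0:ℝ) < T - u := by linarith [hu.2]
        dsimp only
        have e0 : (∫ v in Set.Ioo (0:ℝ) t, (T - u) ^ (-α) * (T - v) ^ (-α) * |v - u| ^ (2*H - 2))
            = (T - u) ^ (-α) * ∫ v in Set.Ioo (0:ℝ) t, (T - v) ^ (-α) * |v - u| ^ (2*H - 2) := by
          simp_rw [mul_assoc]
          exact integral_const_mul _ _
        rw [e0]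
        have hib := inner_bound (α := α) hH hH1 hα ht0 htT hu
        rw [← hC] at hib
        calc (T - u) ^ (-α) * ∫ v in Set.Ioo (0:ℝ) t, (T - v) ^ (-α) * |v - u| ^ (2*H - 2)
            ≤ (T - u) ^ (-α) * ((T - t) ^ (H - α) * (C * (T - u) ^ (-(1/2) : ℝ))) :=
              mul_le_mul_of_nonneg_left hib (Real.rpow_nonneg hx.le _)
          _ = ((T - t) ^ (H - α) * C) * (T - u) ^ (-α + -(1/2) : ℝ) := by
              rw [← rpow_add_eq hx (rfl : -α + -(1/2) = -α + -(1/2))]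
              ring
    have hval : ∫ u in Set.Ioo (0:ℝ) t, ((T - t) ^ (H - α) * C) * (T - u) ^ (-α + -(1/2) : ℝ)
        = ((T - t) ^ (H - α) * C) *
          ((T ^ (-α + -(1/2) + 1 : ℝ) - (T - t) ^ (-α + -(1/2) + 1 : ℝ)) / (-α + -(1/2) + 1)) := by
      rw [integral_const_mul, int_left ht0.le htT.le
        (Or.inr ⟨by intro hcon; linarith, htT⟩), sub_zero]
    have hfin : (T ^ (-α + -(1/2) + 1 : ℝ) - (T - t) ^ (-α + -(1/2) + 1 : ℝ)) /
          (-α + -(1/2) + 1) ≤ (T - t) ^ (-α + -(1/2) + 1 : ℝ) / (α - 1/2) := by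
      have h1 : (-α + -(1/2) + 1 : ℝ) = -(α - 1/2) := by ring
      rw [h1]
      exact sub_div_neg_le (Real.rpow_nonneg hT.le _) (by linarith)
    have hpow : (T - t) ^ (2*α - 1) * (T - t) ^ (H - α) * (T - t) ^ (-α + -(1/2) + 1 : ℝ)
        = (T - t) ^ (H - 1/2) := by
      rw [rpow_add_eq hε (show 2*α - 1 + (H - α) = α + H - 1 by ring),
        rpow_add_eq hε (show α + H - 1 + (-α + -(1/2) + 1) = H - 1/2 by ring)]
    calc (T - t) ^ (2*α - 1) * (∫ u in Set.Ioo (0:ℝ) t, ∫ v in Set.Ioo (0:ℝ) t,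
          (T - u) ^ (-α) * (T - v) ^ (-α) * |v - u| ^ (2*H - 2))
        ≤ (T - t) ^ (2*α - 1) * (((T - t) ^ (H - α) * C) *
            ((T ^ (-α + -(1/2) + 1 : ℝ) - (T - t) ^ (-α + -(1/2) + 1 : ℝ)) /
              (-α + -(1/2) + 1))) :=
          mul_le_mul_of_nonneg_left (houter.trans_eq hval) (Real.rpow_nonneg hε.le _)
      _ ≤ (T - t) ^ (2*α - 1) * (((T - t) ^ (H - α) * C) *
            ((T - t) ^ (-α + -(1/2) + 1 : ℝ) / (α - 1/2))) := by
          refine mul_le_mul_of_nonneg_left (mul_le_mul_of_nonneg_left hfin ?_)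
            (Real.rpow_nonneg hε.le _)
          exact mul_nonneg (Real.rpow_nonneg hε.le _) hCnn
      _ = ((T - t) ^ (2*α - 1) * (T - t) ^ (H - α) * (T - t) ^ (-α + -(1/2) + 1 : ℝ)) *
            (C / (α - 1/2)) := by ring
      _ = C / (α - 1/2) * (T - t) ^ (H - 1/2) := by rw [hpow]; ring
  -- squeeze
  refine squeeze_zero' (g := fun t : ℝ => C / (α - 1/2) * (T - t) ^ (H - 1/2)) ?_ ?_ ?_
  · filter_upwards [Ioo_mem_nhdsLT (show T/2 < T by linarith)] with t ht
    exact nonneg t ht.2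
  · filter_upwards [Ioo_mem_nhdsLT (show T/2 < T by linarith)] with t ht
    exact key t ht
  · have h1 : Filter.Tendsto (fun t : ℝ => T - t) (nhdsWithin T (Set.Iio T)) (nhds 0) := by
      have hc : Continuous (fun t : ℝ => T - t) := continuous_const.sub continuous_id
      have h0 : Filter.Tendsto (fun t : ℝ => T - t) (nhds T) (nhds (T - T)) := hc.tendsto T
      rw [sub_self] at h0
      exact h0.mono_left nhdsWithin_le_nhds
    have h2 : ContinuousAt (fun y : ℝ => y ^ (H - 1/2)) 0 :=
      Real.continuousAt_rpow_const 0 _ (Or.inr (by linarith))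
    have h3 := (h2.tendsto.comp h1 :)
    rw [Real.zero_rpow (ne_of_gt (by linarith : (0:ℝ) < H - 1/2))] at h3
    have h4 := h3.const_mul (C / (α - 1/2))
    simpa [Function.comp] using h4
end

section
/- Let H ∈ (1/2,1), α ∈ (0, 1−H), and T > 0. Then ∫₀ᵀ∫₀ᵀ∫ᵤᵀ∫ₓᵀ u^(−α) x^(−α) |u−x|^(2H−2) v^(α−1) y^(α−1) |v−y|^(2H−2) dy dv dx du < ∞. -/
open MeasureTheory Set
open scoped ENNReal


-- L1
lemma myJ_lt_top {p T : ℝ} (hp : -1 < p) (hT : 0 < T) :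
    ∫⁻ r in Ioo (0:ℝ) T, ENNReal.ofReal (r ^ p) < ⊤ := by
  have h : IntervalIntegrable (fun x : ℝ => x ^ p) volume 0 T :=
    intervalIntegral.intervalIntegrable_rpow' hp
  have h2 : IntegrableOn (fun x : ℝ => x ^ p) (Ioo 0 T) volume :=
    h.1.mono_set Ioo_subset_Ioc_self
  exact h2.lintegral_lt_top

-- L2
lemma myTrans {p T s : ℝ} (hs : s ∈ Ioo (0:ℝ) T) :
    ∫⁻ t in Ioo (0:ℝ) T, ENNReal.ofReal (|s - t| ^ p)
      ≤ 2 * ∫⁻ r in Ioo (0:ℝ) T, ENNReal.ofReal (r ^ p) := by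
  obtain ⟨hs0, hsT⟩ := hs
  have hT : 0 < T := lt_trans hs0 hsT
  have habs : ∫⁻ r in Ioo (0:ℝ) T, ENNReal.ofReal (|r| ^ p)
      = ∫⁻ r in Ioo (0:ℝ) T, ENNReal.ofReal (r ^ p) := by
    refine setLIntegral_congr_fun measurableSet_Ioo (fun r hr => ?_)
    rw [abs_of_pos hr.1]
  have key : ∫⁻ t in Ioo (0:ℝ) T, ENNReal.ofReal (|s - t| ^ p)
      = ∫⁻ r in Ioo (s - T) s, ENNReal.ofReal (|r| ^ p) := by
    have hpre : (fun t : ℝ => s - t) ⁻¹' Ioo (s - T) s = Ioo 0 T := by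
      ext t
      simp only [mem_preimage, mem_Ioo]
      constructor <;> rintro ⟨h1, h2⟩ <;> constructor <;> linarith
    have hemb : MeasurableEmbedding (fun t : ℝ => s - t) :=
      (MeasurableEquiv.subLeft s).measurableEmbedding
    rw [← hpre]
    exact (Measure.measurePreserving_sub_left volume s).setLIntegral_comp_preimage_emb
      hemb (fun r => ENNReal.ofReal (|r| ^ p)) _
  have keyneg : ∫⁻ r in Ioo (-T) 0, ENNReal.ofReal (|r| ^ p)
      = ∫⁻ r in Ioo (0:ℝ) T, ENNReal.ofReal (|r| ^ p) := by
    have hpre : (fun t : ℝ => (0:ℝ) - t) ⁻¹' Ioo (-T) 0 = Ioo 0 T := by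
      ext t
      simp only [mem_preimage, mem_Ioo]
      constructor <;> rintro ⟨h1, h2⟩ <;> constructor <;> linarith
    have hemb : MeasurableEmbedding (fun t : ℝ => (0:ℝ) - t) :=
      (MeasurableEquiv.subLeft (0:ℝ)).measurableEmbedding
    have h1 : ∫⁻ t in Ioo (0:ℝ) T, ENNReal.ofReal (|(0:ℝ) - t| ^ p)
        = ∫⁻ r in Ioo (-T) (0:ℝ), ENNReal.ofReal (|r| ^ p) := by
      rw [← hpre]
      exact (Measure.measurePreserving_sub_left volume (0:ℝ)).setLIntegral_comp_preimage_emb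
        hemb (fun r => ENNReal.ofReal (|r| ^ p)) _
    rw [← h1]
    refine setLIntegral_congr_fun measurableSet_Ioo (fun r _ => ?_)
    rw [zero_sub, abs_neg]
  have keyIco : ∫⁻ r in Ico (0:ℝ) T, ENNReal.ofReal (|r| ^ p)
      = ∫⁻ r in Ioo (0:ℝ) T, ENNReal.ofReal (|r| ^ p) := by
    rw [← Measure.restrict_congr_set Ioo_ae_eq_Ico]
  calc ∫⁻ t in Ioo (0:ℝ) T, ENNReal.ofReal (|s - t| ^ p)
      = ∫⁻ r in Ioo (s - T) s, ENNReal.ofReal (|r| ^ p) := key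
    _ ≤ ∫⁻ r in Ioo (-T) T, ENNReal.ofReal (|r| ^ p) :=
        lintegral_mono_set (fun r hr => ⟨by linarith [hr.1], by linarith [hr.2]⟩)
    _ = ∫⁻ r in Ioo (-T) 0 ∪ Ico 0 T, ENNReal.ofReal (|r| ^ p) := by
        rw [Ioo_union_Ico_eq_Ioo (by linarith) hT.le]
    _ = (∫⁻ r in Ioo (-T) 0, ENNReal.ofReal (|r| ^ p))
        + ∫⁻ r in Ico (0:ℝ) T, ENNReal.ofReal (|r| ^ p) := by
        rw [lintegral_union measurableSet_Ico]
        exact Set.disjoint_left.mpr (fun r hr hr2 => absurd hr2.1 (not_le.mpr hr.2))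
    _ = (∫⁻ r in Ioo (0:ℝ) T, ENNReal.ofReal (r ^ p))
        + ∫⁻ r in Ioo (0:ℝ) T, ENNReal.ofReal (r ^ p) := by
        rw [keyneg, keyIco, habs]
    _ = 2 * ∫⁻ r in Ioo (0:ℝ) T, ENNReal.ofReal (r ^ p) := (two_mul _).symm

-- ordered pointwise bound
lemma myPt_aux {H s t : ℝ} (hH : 1/2 < H) (hH1 : H < 1) (ht : 0 < t) (hts : t ≤ s) :
    s ^ (-(1/2) : ℝ) * t ^ (-(1/2) : ℝ) * |s - t| ^ (2*H - 2)
      ≤ t ^ (H - 3/2) * |s - t| ^ (H - 3/2) := by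
  have hs : 0 < s := lt_of_lt_of_le ht hts
  rcases eq_or_lt_of_le hts with heq | hlt
  · rw [← heq, sub_self, abs_zero, Real.zero_rpow (by intro h; nlinarith : 2*H - 2 ≠ 0)]
    rw [mul_zero]
    positivity
  · have hst : (0:ℝ) < s - t := by linarith
    rw [abs_of_pos hst]
    have h1 : (s - t) ^ (2*H - 2) = (s - t) ^ (H - 1/2) * (s - t) ^ (H - 3/2) := by
      rw [← Real.rpow_add hst]; ring_nf
    have hfac : s ^ (-(1/2):ℝ) * (s - t) ^ (H - 1/2) ≤ t ^ (H - 1) := by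
      calc s ^ (-(1/2):ℝ) * (s - t) ^ (H - 1/2)
          ≤ s ^ (-(1/2):ℝ) * s ^ (H - 1/2) := by
            refine mul_le_mul_of_nonneg_left ?_ (Real.rpow_nonneg hs.le _)
            exact Real.rpow_le_rpow hst.le (by linarith) (by linarith)
        _ = s ^ (H - 1) := by rw [← Real.rpow_add hs]; ring_nf
        _ ≤ t ^ (H - 1) := Real.rpow_le_rpow_of_nonpos ht hts (by linarith)
    calc s ^ (-(1/2):ℝ) * t ^ (-(1/2):ℝ) * (s - t) ^ (2*H - 2)
        = (s ^ (-(1/2):ℝ) * (s - t) ^ (H - 1/2)) * (t ^ (-(1/2):ℝ) * (s - t) ^ (H - 3/2)) := by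
          rw [h1]; ring
      _ ≤ t ^ (H - 1) * (t ^ (-(1/2):ℝ) * (s - t) ^ (H - 3/2)) := by
          refine mul_le_mul_of_nonneg_right hfac ?_
          positivity
      _ = t ^ (H - 3/2) * (s - t) ^ (H - 3/2) := by
          rw [← mul_assoc, ← Real.rpow_add ht]; ring_nf

lemma myPt {H s t : ℝ} (hH : 1/2 < H) (hH1 : H < 1) (hs : 0 < s) (ht : 0 < t) :
    s ^ (-(1/2) : ℝ) * t ^ (-(1/2) : ℝ) * |s - t| ^ (2*H - 2)
      ≤ s ^ (H - 3/2) * |s - t| ^ (H - 3/2) + t ^ (H - 3/2) * |s - t| ^ (H - 3/2) := by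
  rcases le_total t s with h | h
  · calc s ^ (-(1/2) : ℝ) * t ^ (-(1/2) : ℝ) * |s - t| ^ (2*H - 2)
        ≤ t ^ (H - 3/2) * |s - t| ^ (H - 3/2) := myPt_aux hH hH1 ht h
      _ ≤ _ := le_add_of_nonneg_left (by positivity)
  · have := myPt_aux hH hH1 hs h
    rw [abs_sub_comm] at this
    calc s ^ (-(1/2) : ℝ) * t ^ (-(1/2) : ℝ) * |s - t| ^ (2*H - 2)
        = t ^ (-(1/2) : ℝ) * s ^ (-(1/2) : ℝ) * |s - t| ^ (2*H - 2) := by ring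
      _ ≤ s ^ (H - 3/2) * |s - t| ^ (H - 3/2) := this
      _ ≤ _ := le_add_of_nonneg_right (by positivity)

-- decoupling
lemma myDec {H α u x v y : ℝ} (hα0 : 0 < α) (hα2 : α ≤ 1/2)
    (hu : 0 < u) (hx : 0 < x) (huv : u < v) (hxy : x < y) :
    u ^ (-α) * x ^ (-α) * |u - x| ^ (2*H - 2) * v ^ (α - 1) * y ^ (α - 1) * |v - y| ^ (2*H - 2)
      ≤ (u ^ (-(1/2):ℝ) * x ^ (-(1/2):ℝ) * |u - x| ^ (2*H - 2))
        * (v ^ (-(1/2):ℝ) * y ^ (-(1/2):ℝ) * |v - y| ^ (2*H - 2)) := by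
  have hv : (0:ℝ) < v := lt_trans hu huv
  have hy : (0:ℝ) < y := lt_trans hx hxy
  have hvb : v ^ (α - 1) ≤ u ^ (α - 1/2) * v ^ (-(1/2):ℝ) := by
    have h1 : v ^ (α - 1) = v ^ (α - 1/2) * v ^ (-(1/2):ℝ) := by
      rw [← Real.rpow_add hv]; ring_nf
    rw [h1]
    refine mul_le_mul_of_nonneg_right ?_ (Real.rpow_nonneg hv.le _)
    exact Real.rpow_le_rpow_of_nonpos hu huv.le (by linarith)
  have hyb : y ^ (α - 1) ≤ x ^ (α - 1/2) * y ^ (-(1/2):ℝ) := by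
    have h1 : y ^ (α - 1) = y ^ (α - 1/2) * y ^ (-(1/2):ℝ) := by
      rw [← Real.rpow_add hy]; ring_nf
    rw [h1]
    refine mul_le_mul_of_nonneg_right ?_ (Real.rpow_nonneg hy.le _)
    exact Real.rpow_le_rpow_of_nonpos hx hxy.le (by linarith)
  have hu2 : u ^ (-α) * u ^ (α - 1/2) = u ^ (-(1/2):ℝ) := by
    rw [← Real.rpow_add hu]; ring_nf
  have hx2 : x ^ (-α) * x ^ (α - 1/2) = x ^ (-(1/2):ℝ) := by
    rw [← Real.rpow_add hx]; ring_nf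
  calc u ^ (-α) * x ^ (-α) * |u - x| ^ (2*H - 2) * v ^ (α - 1) * y ^ (α - 1) * |v - y| ^ (2*H - 2)
      ≤ u ^ (-α) * x ^ (-α) * |u - x| ^ (2*H - 2) * (u ^ (α - 1/2) * v ^ (-(1/2):ℝ))
          * (x ^ (α - 1/2) * y ^ (-(1/2):ℝ)) * |v - y| ^ (2*H - 2) := by
        have h2 : 0 ≤ y ^ (α - 1) := Real.rpow_nonneg hy.le _
        have h3 : 0 ≤ u ^ (α - 1/2) * v ^ (-(1/2):ℝ) := by positivity
        have h4 : 0 ≤ u ^ (-α) * x ^ (-α) * |u - x| ^ (2*H - 2) := by positivity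
        have h5 : 0 ≤ |v - y| ^ (2*H - 2) := by positivity
        have h6 : 0 ≤ v ^ (α-1) := Real.rpow_nonneg hv.le _
        calc u ^ (-α) * x ^ (-α) * |u - x| ^ (2*H - 2) * v ^ (α - 1) * y ^ (α - 1)
              * |v - y| ^ (2*H - 2)
            ≤ u ^ (-α) * x ^ (-α) * |u - x| ^ (2*H - 2) * (u ^ (α - 1/2) * v ^ (-(1/2):ℝ))
              * y ^ (α - 1) * |v - y| ^ (2*H - 2) := by
              refine mul_le_mul_of_nonneg_right (mul_le_mul_of_nonneg_right ?_ h2) h5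
              exact mul_le_mul_of_nonneg_left hvb h4
          _ ≤ _ := by
              refine mul_le_mul_of_nonneg_right (mul_le_mul_of_nonneg_left hyb ?_) h5
              positivity
    _ = (u ^ (-α) * u ^ (α - 1/2)) * (x ^ (-α) * x ^ (α - 1/2)) * |u - x| ^ (2*H - 2)
          * v ^ (-(1/2):ℝ) * y ^ (-(1/2):ℝ) * |v - y| ^ (2*H - 2) := by ring
    _ = _ := by rw [hu2, hx2]; ring
noncomputable def myF (p : ℝ) : ℝ → ℝ → ℝ≥0∞ :=
  fun a b => ENNReal.ofReal (a ^ p) * ENNReal.ofReal (|a - b| ^ p)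

lemma myF_meas (p : ℝ) : Measurable (Function.uncurry (myF p)) := by
  unfold Function.uncurry myF
  fun_prop

lemma myF_meas2 (p : ℝ) : Measurable (fun z : ℝ × ℝ => myF p z.2 z.1) := by
  unfold myF
  fun_prop

lemma myK_lt_top {H T : ℝ} (hH : 1/2 < H) (hH1 : H < 1) (hT : 0 < T) :
    (∫⁻ s in Ioo (0:ℝ) T, ∫⁻ t in Ioo (0:ℝ) T,
      ENNReal.ofReal (s ^ (-(1/2):ℝ) * t ^ (-(1/2):ℝ) * |s - t| ^ (2*H - 2))) < ⊤ := by
  have hp1 : -1 < H - 3/2 := by linarith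
  set J := ∫⁻ r in Ioo (0:ℝ) T, ENNReal.ofReal (r ^ (H - 3/2)) with hJ
  have hJt : J < ⊤ := myJ_lt_top hp1 hT
  have h2Jt : (2 : ℝ≥0∞) * J ≠ ⊤ := ENNReal.mul_ne_top (by norm_num) hJt.ne
  set F := myF (H - 3/2) with hFdef
  -- pointwise bound
  have hpt : ∀ s ∈ Ioo (0:ℝ) T, ∀ t ∈ Ioo (0:ℝ) T,
      ENNReal.ofReal (s ^ (-(1/2):ℝ) * t ^ (-(1/2):ℝ) * |s - t| ^ (2*H - 2))
        ≤ F s t + F t s := by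
    intro s hs t ht
    calc ENNReal.ofReal (s ^ (-(1/2):ℝ) * t ^ (-(1/2):ℝ) * |s - t| ^ (2*H - 2))
        ≤ ENNReal.ofReal (s ^ (H - 3/2) * |s - t| ^ (H - 3/2)
            + t ^ (H - 3/2) * |s - t| ^ (H - 3/2)) :=
          ENNReal.ofReal_le_ofReal (myPt hH hH1 hs.1 ht.1)
      _ = ENNReal.ofReal (s ^ (H - 3/2) * |s - t| ^ (H - 3/2))
            + ENNReal.ofReal (t ^ (H - 3/2) * |s - t| ^ (H - 3/2)) :=
          ENNReal.ofReal_add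
            (mul_nonneg (Real.rpow_nonneg hs.1.le _) (Real.rpow_nonneg (abs_nonneg _) _))
            (mul_nonneg (Real.rpow_nonneg ht.1.le _) (Real.rpow_nonneg (abs_nonneg _) _))
      _ = F s t + F t s := by
          rw [hFdef]
          unfold myF
          rw [ENNReal.ofReal_mul (Real.rpow_nonneg hs.1.le _),
            ENNReal.ofReal_mul (Real.rpow_nonneg ht.1.le _), abs_sub_comm t s]
  -- row bound
  have hrow : ∀ s ∈ Ioo (0:ℝ) T,
      (∫⁻ t in Ioo (0:ℝ) T, F s t) ≤ ENNReal.ofReal (s ^ (H - 3/2)) * (2 * J) := by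
    intro s hs
    calc ∫⁻ t in Ioo (0:ℝ) T, F s t
        = ENNReal.ofReal (s ^ (H - 3/2))
            * ∫⁻ t in Ioo (0:ℝ) T, ENNReal.ofReal (|s - t| ^ (H - 3/2)) := by
          rw [hFdef]; unfold myF
          exact lintegral_const_mul' _ _ ENNReal.ofReal_ne_top
      _ ≤ ENNReal.ofReal (s ^ (H - 3/2)) * (2 * J) := mul_le_mul_right (myTrans hs) _
  have hdiag : (∫⁻ s in Ioo (0:ℝ) T, ∫⁻ t in Ioo (0:ℝ) T, F s t) ≤ J * (2 * J) := by
    calc ∫⁻ s in Ioo (0:ℝ) T, ∫⁻ t in Ioo (0:ℝ) T, F s t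
        ≤ ∫⁻ s in Ioo (0:ℝ) T, ENNReal.ofReal (s ^ (H - 3/2)) * (2 * J) :=
          setLIntegral_mono' measurableSet_Ioo hrow
      _ = J * (2 * J) := lintegral_mul_const' _ _ h2Jt
  have hswap : (∫⁻ s in Ioo (0:ℝ) T, ∫⁻ t in Ioo (0:ℝ) T, F t s)
      = ∫⁻ t in Ioo (0:ℝ) T, ∫⁻ s in Ioo (0:ℝ) T, F t s := by
    rw [hFdef]
    exact lintegral_lintegral_swap (myF_meas2 (H - 3/2)).aemeasurable
  have hmeas_row : Measurable fun s => ∫⁻ t in Ioo (0:ℝ) T, F s t := by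
    rw [hFdef]
    exact (myF_meas (H - 3/2)).lintegral_prod_right
  calc (∫⁻ s in Ioo (0:ℝ) T, ∫⁻ t in Ioo (0:ℝ) T,
      ENNReal.ofReal (s ^ (-(1/2):ℝ) * t ^ (-(1/2):ℝ) * |s - t| ^ (2*H - 2)))
      ≤ ∫⁻ s in Ioo (0:ℝ) T, ∫⁻ t in Ioo (0:ℝ) T, (F s t + F t s) := by
        refine setLIntegral_mono' measurableSet_Ioo fun s hs => ?_
        exact setLIntegral_mono' measurableSet_Ioo fun t ht => hpt s hs t ht
    _ = (∫⁻ s in Ioo (0:ℝ) T, ∫⁻ t in Ioo (0:ℝ) T, F s t)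
        + ∫⁻ s in Ioo (0:ℝ) T, ∫⁻ t in Ioo (0:ℝ) T, F t s := by
        have h1 : ∀ s : ℝ, ∫⁻ t in Ioo (0:ℝ) T, (F s t + F t s)
            = (∫⁻ t in Ioo (0:ℝ) T, F s t) + ∫⁻ t in Ioo (0:ℝ) T, F t s := by
          intro s
          refine lintegral_add_left ?_ _
          rw [hFdef]; unfold myF; fun_prop
        simp_rw [h1]
        refine lintegral_add_left hmeas_row _
    _ ≤ J * (2 * J) + J * (2 * J) := by
        refine add_le_add hdiag ?_
        rw [hswap]
        exact hdiag
    _ < ⊤ := by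
        refine ENNReal.add_lt_top.mpr ⟨?_, ?_⟩ <;>
          exact ENNReal.mul_lt_top hJt (ENNReal.mul_lt_top (by norm_num) hJt)
theorem stmt15 (H α T : ℝ) (hH : 1/2 < H) (hH1 : H < 1)
    (hα : α ∈ Set.Ioo (0:ℝ) (1 - H)) (hT : 0 < T) :
    (∫⁻ u in Set.Ioo (0:ℝ) T, ∫⁻ x in Set.Ioo (0:ℝ) T,
      ∫⁻ v in Set.Ioo u T, ∫⁻ y in Set.Ioo x T,
        ENNReal.ofReal (u ^ (-α) * x ^ (-α) * |u - x| ^ (2*H - 2) *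
          v ^ (α - 1) * y ^ (α - 1) * |v - y| ^ (2*H - 2))) < ⊤ := by
  obtain ⟨hα0, hα1⟩ := hα
  have hα2 : α ≤ 1/2 := by linarith
  set f : ℝ → ℝ → ℝ≥0∞ := fun s t =>
    ENNReal.ofReal (s ^ (-(1/2):ℝ) * t ^ (-(1/2):ℝ) * |s - t| ^ (2*H - 2)) with hf
  have hfne : ∀ a b : ℝ, f a b ≠ ⊤ := by
    intro a b; simp only [hf]; exact ENNReal.ofReal_ne_top
  set K := ∫⁻ s in Ioo (0:ℝ) T, ∫⁻ t in Ioo (0:ℝ) T, f s t with hK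
  have hKt : K < ⊤ := myK_lt_top hH hH1 hT
  have hKne : K ≠ ⊤ := hKt.ne
  have hA : (∫⁻ u in Set.Ioo (0:ℝ) T, ∫⁻ x in Set.Ioo (0:ℝ) T,
      ∫⁻ v in Set.Ioo u T, ∫⁻ y in Set.Ioo x T,
        ENNReal.ofReal (u ^ (-α) * x ^ (-α) * |u - x| ^ (2*H - 2) *
          v ^ (α - 1) * y ^ (α - 1) * |v - y| ^ (2*H - 2)))
      ≤ ∫⁻ u in Ioo (0:ℝ) T, ∫⁻ x in Ioo (0:ℝ) T,
          ∫⁻ v in Ioo (0:ℝ) T, ∫⁻ y in Ioo (0:ℝ) T, f u x * f v y := by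
    refine setLIntegral_mono' measurableSet_Ioo fun u hu => ?_
    refine setLIntegral_mono' measurableSet_Ioo fun x hx => ?_
    calc (∫⁻ v in Set.Ioo u T, ∫⁻ y in Set.Ioo x T,
        ENNReal.ofReal (u ^ (-α) * x ^ (-α) * |u - x| ^ (2*H - 2) *
          v ^ (α - 1) * y ^ (α - 1) * |v - y| ^ (2*H - 2)))
        ≤ ∫⁻ v in Set.Ioo u T, ∫⁻ y in Set.Ioo x T, f u x * f v y := by
          refine setLIntegral_mono' measurableSet_Ioo fun v hv => ?_
          refine setLIntegral_mono' measurableSet_Ioo fun y hy => ?_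
          have hd := myDec (H := H) hα0 hα2 hu.1 hx.1 hv.1 hy.1
          calc ENNReal.ofReal (u ^ (-α) * x ^ (-α) * |u - x| ^ (2*H - 2) *
                v ^ (α - 1) * y ^ (α - 1) * |v - y| ^ (2*H - 2))
              ≤ ENNReal.ofReal ((u ^ (-(1/2):ℝ) * x ^ (-(1/2):ℝ) * |u - x| ^ (2*H - 2))
                  * (v ^ (-(1/2):ℝ) * y ^ (-(1/2):ℝ) * |v - y| ^ (2*H - 2))) :=
                ENNReal.ofReal_le_ofReal hd
            _ = f u x * f v y := by
                simp only [hf]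
                refine ENNReal.ofReal_mul ?_
                have h1 : (0:ℝ) ≤ u ^ (-(1/2):ℝ) := Real.rpow_nonneg hu.1.le _
                have h2 : (0:ℝ) ≤ x ^ (-(1/2):ℝ) := Real.rpow_nonneg hx.1.le _
                positivity
      _ ≤ ∫⁻ v in Set.Ioo u T, ∫⁻ y in Ioo (0:ℝ) T, f u x * f v y :=
          lintegral_mono fun v => lintegral_mono_set (Ioo_subset_Ioo hx.1.le le_rfl)
      _ ≤ ∫⁻ v in Ioo (0:ℝ) T, ∫⁻ y in Ioo (0:ℝ) T, f u x * f v y :=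
          lintegral_mono_set (Ioo_subset_Ioo hu.1.le le_rfl)
  have hin : ∀ u x : ℝ, (∫⁻ v in Ioo (0:ℝ) T, ∫⁻ y in Ioo (0:ℝ) T, f u x * f v y)
      = f u x * K := by
    intro u x
    calc (∫⁻ v in Ioo (0:ℝ) T, ∫⁻ y in Ioo (0:ℝ) T, f u x * f v y)
        = ∫⁻ v in Ioo (0:ℝ) T, f u x * ∫⁻ y in Ioo (0:ℝ) T, f v y :=
          lintegral_congr fun v => lintegral_const_mul' _ _ (hfne u x)
      _ = f u x * K := lintegral_const_mul' _ _ (hfne u x)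
  have hB : (∫⁻ u in Ioo (0:ℝ) T, ∫⁻ x in Ioo (0:ℝ) T,
      ∫⁻ v in Ioo (0:ℝ) T, ∫⁻ y in Ioo (0:ℝ) T, f u x * f v y) = K * K := by
    calc (∫⁻ u in Ioo (0:ℝ) T, ∫⁻ x in Ioo (0:ℝ) T,
        ∫⁻ v in Ioo (0:ℝ) T, ∫⁻ y in Ioo (0:ℝ) T, f u x * f v y)
        = ∫⁻ u in Ioo (0:ℝ) T, ∫⁻ x in Ioo (0:ℝ) T, f u x * K :=
          lintegral_congr fun u => lintegral_congr fun x => hin u x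
      _ = ∫⁻ u in Ioo (0:ℝ) T, (∫⁻ x in Ioo (0:ℝ) T, f u x) * K :=
          lintegral_congr fun u => lintegral_mul_const' _ _ hKne
      _ = K * K := lintegral_mul_const' _ _ hKne
  exact lt_of_le_of_lt (hA.trans hB.le) (ENNReal.mul_lt_top hKt hKt)
end
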